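/- arXiv:2107.05082 — 5 statements merged into one kernel-verified Lean document; each statement's English description precedes it below -/
import Mathlib

section
/- (Sufficiency for strong minimax universality.) Let Λ be a family of probability measures on X and d > 0. Suppose there exists a sequence of countable partitions {π_n : n ≥ 1} of X^n such that: (i) π_n ∈ Q_n(d) for all n ≥ 1; (ii) lim_{n→∞} (1/n)·R⁺(Λ^n, σ(π_n)) = 0; and (iii) lim_{n→∞} (1/n)·sup_{μ ∈ Λ} [H_{σ(π_n)}(μ^n) − n·R_n(d, μ^n)] = 0 (in particular H_{σ(π_n)}(μ^n) < ∞ for all μ ∈ Λ and all large n). Then there exists a D-semifaithful coding scheme {ξ_n : n ≥ 1} operating at distortion d that is strongly minimax universal for Λ. -/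
open Filter Topology
open scoped ENNReal NNReal BigOperators

noncomputable section

/-- Block (single-letter) distortion `ρ_n` on `Fin n → α`. -/
def blockDist {α : Type*} (ρ : α → α → ℝ) (n : ℕ) (x y : Fin n → α) : ℝ :=
  (∑ i, ρ (x i) (y i)) / n

/-- `π` is a (countable) partition: nonempty cells, every point in exactly one cell. -/
def IsPartition {α : Type*} (π : Set (Set α)) : Prop :=
  (∀ s ∈ π, s.Nonempty) ∧ ∀ x : α, ∃! s, s ∈ π ∧ x ∈ s

/-- `Q_n(d)`: partitions whose every cell contains a prototype within distortion `d`. -/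
def QPart {α : Type*} (ρ : α → α → ℝ) (n : ℕ) (d : ℝ) (π : Set (Set (Fin n → α))) : Prop :=
  IsPartition π ∧ ∀ A ∈ π, ∃ y ∈ A, ∀ x ∈ A, blockDist ρ n x y ≤ d

/-- Measure of a set under a pmf. -/
def measOf {α : Type*} (p : α → ℝ≥0∞) (s : Set α) : ℝ≥0∞ := ∑' x : s, p x.1

/-- `entTerm t = t·log₂(1/t) ∈ [0,∞]`, with the convention `0·log 0 = 0`. -/
def entTerm (t : ℝ≥0∞) : ℝ≥0∞ := ENNReal.ofReal (-(t.toReal * Real.logb 2 t.toReal))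

/-- Entropy of `p` restricted to the σ-field generated by the partition `π` (base 2). -/
def Hpart {α : Type*} (π : Set (Set α)) (p : α → ℝ≥0∞) : ℝ≥0∞ :=
  ∑' A : π, entTerm (measOf p A.1)

/-- Shannon entropy of a pmf (base 2). -/
def Hent {α : Type*} (p : α → ℝ≥0∞) : ℝ≥0∞ := ∑' x, entTerm (p x)

/-- Nonnegative per-cell KL term `(a log(a/b) − a + b)/log 2`; summed over a partition and
probability vectors (`∑ a = ∑ b = 1`) this gives exactly `∑ a log₂(a/b) ∈ [0,∞]` with the
usual conventions (`0·log(0/q) = 0`, `p·log(p/0) = ∞` for `p > 0`). -/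
def klTerm (a b : ℝ≥0∞) : ℝ≥0∞ :=
  if a = 0 then ENNReal.ofReal (b.toReal / Real.log 2)
  else if b = 0 then ⊤
  else ENNReal.ofReal
    ((a.toReal * Real.log (a.toReal / b.toReal) - a.toReal + b.toReal) / Real.log 2)

/-- Divergence `D_{σ(π)}(p‖q) ∈ [0,∞]` restricted to the cells of `π` (base 2). -/
def Dpart {α : Type*} (π : Set (Set α)) (p q : α → ℝ≥0∞) : ℝ≥0∞ :=
  ∑' A : π, klTerm (measOf p A.1) (measOf q A.1)

/-- `p` is a probability mass function. -/
def IsPMF {α : Type*} (p : α → ℝ≥0∞) : Prop := ∑' a, p a = 1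

/-- `n`-fold i.i.d. product pmf `μ^n`. -/
def prodPMF {α : Type*} (p : α → ℝ≥0∞) (n : ℕ) : (Fin n → α) → ℝ≥0∞ :=
  fun x => ∏ i, p (x i)

/-- `Λ^n = {μ^n : μ ∈ Λ}`. -/
def prodFam {α : Type*} (Λ : Set (α → ℝ≥0∞)) (n : ℕ) : Set ((Fin n → α) → ℝ≥0∞) :=
  (fun μ => prodPMF μ n) '' Λ

/-- Operational rate `R_n(d, μ_n) = inf_{π ∈ Q_n(d)} H_{σ(π)}(μ_n)/n`. -/
def opRate {α : Type*} (ρ : α → α → ℝ) (n : ℕ) (d : ℝ) (μn : (Fin n → α) → ℝ≥0∞) : ℝ≥0∞ :=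
  ⨅ π ∈ {π | QPart ρ n d π}, Hpart π μn / (n : ℝ≥0∞)

/-- Kraft inequality for a codeword-length function on `B`. -/
def Kraft {β : Type*} (B : Set β) (ℓ : β → ℕ) : Prop :=
  (∑' y : B, (2⁻¹ : ℝ≥0∞) ^ ℓ y.1) ≤ 1

/-- D-semifaithful code `ξ_n = (φ, ℓ)` of length `n` operating at distortion `d`. -/
def IsCode {α : Type*} (ρ : α → α → ℝ) (n : ℕ) (d : ℝ)
    (φ : (Fin n → α) → Fin n → α) (ℓ : (Fin n → α) → ℕ) : Prop :=
  (∀ x, blockDist ρ n x (φ x) ≤ d) ∧ (∀ y ∈ Set.range φ, φ y = y) ∧ Kraft (Set.range φ) ℓ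

/-- Rate (bits per letter) of the code `(φ, ℓ)` under `μn`. -/
def codeRate {α : Type*} {n : ℕ} (φ : (Fin n → α) → Fin n → α) (ℓ : (Fin n → α) → ℕ)
    (μn : (Fin n → α) → ℝ≥0∞) : ℝ≥0∞ :=
  (∑' x, μn x * (ℓ (φ x) : ℝ≥0∞)) / (n : ℝ≥0∞)

/-- Partition of the block space induced by a quantizer. -/
def codePart {α : Type*} {n : ℕ} (φ : (Fin n → α) → Fin n → α) : Set (Set (Fin n → α)) :=
  {s | ∃ y ∈ Set.range φ, s = φ ⁻¹' {y}}

/-- Information radius `R⁺(Λn, σ(π)) = inf_v sup_{μn ∈ Λn} D_{σ(π)}(μn‖v)`. -/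
def Rplus {β : Type*} (Λn : Set (β → ℝ≥0∞)) (π : Set (Set β)) : ℝ≥0∞ :=
  ⨅ v : {v : β → ℝ≥0∞ // IsPMF v}, ⨆ μn ∈ Λn, Dpart π μn v.1

/-- A distortion function: nonnegative and positive off the diagonal. -/
def IsDistortion {α : Type*} (ρ : α → α → ℝ) : Prop :=
  (∀ x y, 0 ≤ ρ x y) ∧ ∀ x y, x ≠ y → 0 < ρ x y

/-- Unbounded distortion consistent w.r.t. the Euclidean norm on the alphabet ℕ. -/
def ConsistentUnbounded (ρ : ℕ → ℕ → ℝ) : Prop :=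
  ∀ K : ℝ, 0 < K → ∃ ε : ℝ, 0 < ε ∧ ∀ i j : ℕ, ε ≤ |(i : ℝ) - (j : ℝ)| → K ≤ ρ i j

/-- Envelope family `Λ_f`. -/
def envFam (f : ℕ → ℝ≥0) : Set (ℕ → ℝ≥0∞) :=
  {p | IsPMF p ∧ ∀ x, p x ≤ (f x : ℝ≥0∞)}

/-- Tail set `T_k = {k, k+1, ...}`. -/
def Tset (k : ℕ) : Set ℕ := {x | k ≤ x}

/-- Tail sum of the envelope `∑_{x ≥ k} f(x)`. -/
def tailF (f : ℕ → ℝ≥0) (k : ℕ) : ℝ≥0∞ := ∑' x : Tset k, (f x.1 : ℝ≥0∞)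

/-- `τ_f = min{k ≥ 1 : ∑_{x ≥ k} f(x) ≤ 1}`. -/
def tauF (f : ℕ → ℝ≥0) : ℕ := sInf {k | 1 ≤ k ∧ tailF f k ≤ 1}

/-- The envelope distribution `μ̃_f`. -/
def mutilde (f : ℕ → ℝ≥0) : ℕ → ℝ≥0∞ := fun x =>
  if tauF f ≤ x then (f x : ℝ≥0∞)
  else if x = tauF f - 1 then 1 - tailF f (tauF f)
  else 0

/-- `u_f(n) = min{k ≥ 1 : μ̃_f(T_{k+1}) < 1/n}`. -/
def ufn (f : ℕ → ℝ≥0) (n : ℕ) : ℕ :=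
  sInf {k | 1 ≤ k ∧ measOf (mutilde f) (Tset (k + 1)) < (n : ℝ≥0∞)⁻¹}

/-- Tail-partition entropy `H_{σ(π̃_k)}(p)` for the partition `π̃_k = {Γ_k, {k+1}, {k+2}, ...}`. -/
def Htail (k : ℕ) (p : ℕ → ℝ≥0∞) : ℝ≥0∞ :=
  entTerm (measOf p (Set.Iic k)) + ∑' x : Tset (k + 1), entTerm (p x.1)

section AuxLemmas

lemma tsum_partition {α : Type*} {P : Set (Set α)} (hP : IsPartition P) (f : α → ℝ≥0∞) :
    ∑' x, f x = ∑' A : P, measOf f A.1 := by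
  have hb : Function.Bijective (fun p : Σ A : P, A.1 => (p.2.1 : α)) := by
    constructor
    · rintro ⟨A, x, hx⟩ ⟨B, y, hy⟩ h
      simp only at h
      subst h
      obtain ⟨S, ⟨hSP, hxS⟩, hU⟩ := hP.2 x
      have hA : A.1 = S := hU A.1 ⟨A.2, hx⟩
      have hB : B.1 = S := hU B.1 ⟨B.2, hy⟩
      have hAB : A = B := Subtype.ext (hA.trans hB.symm)
      subst hAB
      rfl
    · intro x
      obtain ⟨S, ⟨hSP, hxS⟩, hU⟩ := hP.2 x
      exact ⟨⟨⟨S, hSP⟩, ⟨x, hxS⟩⟩, rfl⟩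
  rw [← Equiv.tsum_eq (Equiv.ofBijective _ hb) f]
  simp only [Equiv.ofBijective_apply]
  rw [ENNReal.tsum_sigma' (fun p : Σ A : P, A.1 => f p.2.1)]
  rfl

lemma isPMF_prod {α : Type*} {p : α → ℝ≥0∞} (hp : IsPMF p) (n : ℕ) :
    IsPMF (prodPMF p n) := by
  induction n with
  | zero =>
    unfold IsPMF prodPMF
    rw [tsum_eq_single (fun i : Fin 0 => i.elim0)]
    · simp
    · intro b hb
      exact absurd (funext fun i => i.elim0) hb
  | succ n ih =>
    unfold IsPMF
    have key : ∀ pr : α × (Fin n → α),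
        prodPMF p (n + 1) ((Fin.consEquiv fun _ => α) pr) = p pr.1 * prodPMF p n pr.2 := by
      rintro ⟨a, g⟩
      simp [prodPMF, Fin.consEquiv, Fin.prod_univ_succ]
    calc ∑' x, prodPMF p (n + 1) x
        = ∑' pr : α × (Fin n → α), prodPMF p (n + 1) ((Fin.consEquiv fun _ => α) pr) :=
          (Equiv.tsum_eq _ _).symm
      _ = ∑' a, ∑' g : Fin n → α, p a * prodPMF p n g := by
          rw [ENNReal.tsum_prod']
          exact tsum_congr fun a => tsum_congr fun g => key ⟨a, g⟩
      _ = 1 := by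
          unfold IsPMF at ih
          simp only [ENNReal.tsum_mul_left, ih, mul_one]
          exact hp

lemma measOf_le_tsum {α : Type*} (p : α → ℝ≥0∞) (s : Set α) : measOf p s ≤ ∑' x, p x :=
  ENNReal.tsum_comp_le_tsum_of_injective Subtype.val_injective p

lemma kl_integrand_nonneg {x y : ℝ} (hx : 0 < x) (hy : 0 < y) :
    0 ≤ x * Real.log (x / y) - x + y := by
  have h := Real.log_le_sub_one_of_pos (div_pos hy hx)
  have hxy : Real.log (x / y) = -Real.log (y / x) := by
    rw [← Real.log_inv]
    congr 1
    field_simp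
  rw [hxy]
  have hmul : x * (y / x) = y := by field_simp
  nlinarith [mul_le_mul_of_nonneg_left h hx.le]

lemma cell_ineq (a q : ℝ≥0∞) (ha1 : a ≤ 1) (hq1 : q ≤ 1) (m : ℕ)
    (hm : q ≠ 0 → (m : ℝ) ≤ Real.logb 2 (q.toReal)⁻¹ + 2) :
    a * m + ENNReal.ofReal (q.toReal / Real.log 2)
      ≤ entTerm a + klTerm a q + ENNReal.ofReal (a.toReal / Real.log 2) + 2 * a := by
  have hL : 0 < Real.log 2 := Real.log_pos one_lt_two
  rcases eq_or_ne a 0 with rfl | ha0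
  · simp [entTerm, klTerm]
  rcases eq_or_ne q 0 with rfl | hq0
  · have : klTerm a 0 = ⊤ := by simp [klTerm, ha0]
    rw [this]
    simp
  -- main case
  have haf : a ≠ ⊤ := ne_top_of_le_ne_top ENNReal.one_ne_top ha1
  have hqf : q ≠ ⊤ := ne_top_of_le_ne_top ENNReal.one_ne_top hq1
  set A := a.toReal with hA
  set Q := q.toReal with hQ
  have hA0 : 0 < A := ENNReal.toReal_pos ha0 haf
  have hQ0 : 0 < Q := ENNReal.toReal_pos hq0 hqf
  have hA1 : A ≤ 1 := by
    rw [hA, ← ENNReal.toReal_one]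
    exact ENNReal.toReal_mono ENNReal.one_ne_top ha1
  have hm' : (m : ℝ) ≤ Real.logb 2 Q⁻¹ + 2 := hm hq0
  -- nonnegativity facts
  have hE : 0 ≤ -(A * Real.logb 2 A) := by
    have : Real.logb 2 A ≤ 0 := Real.logb_nonpos one_lt_two hA0.le hA1
    nlinarith
  have hK : 0 ≤ (A * Real.log (A / Q) - A + Q) / Real.log 2 :=
    div_nonneg (kl_integrand_nonneg hA0 hQ0) hL.le
  -- rewrite all ENNReal quantities as ofReal
  have ea : a = ENNReal.ofReal A := (ENNReal.ofReal_toReal haf).symm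
  have hklt : klTerm a q =
      ENNReal.ofReal ((A * Real.log (A / Q) - A + Q) / Real.log 2) := by
    rw [klTerm, if_neg ha0, if_neg hq0]
  have hent : entTerm a = ENNReal.ofReal (-(A * Real.logb 2 A)) := rfl
  have hlhs : a * m + ENNReal.ofReal (Q / Real.log 2)
      = ENNReal.ofReal (A * m + Q / Real.log 2) := by
    rw [ea, ← ENNReal.ofReal_natCast m, ← ENNReal.ofReal_mul hA0.le,
      ← ENNReal.ofReal_add (by positivity) (by positivity)]
  have hrhs : entTerm a + klTerm a q + ENNReal.ofReal (A / Real.log 2) + 2 * a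
      = ENNReal.ofReal (-(A * Real.logb 2 A) + (A * Real.log (A / Q) - A + Q) / Real.log 2
          + A / Real.log 2 + 2 * A) := by
    rw [hent, hklt, ea]
    rw [← ENNReal.ofReal_ofNat 2, ← ENNReal.ofReal_mul (by norm_num)]
    rw [← ENNReal.ofReal_add hE hK, ← ENNReal.ofReal_add (add_nonneg hE hK) (by positivity),
      ← ENNReal.ofReal_add (by positivity) (by positivity)]
  rw [hlhs, hrhs]
  apply ENNReal.ofReal_le_ofReal
  -- the real inequality
  have hlogdiv : Real.log (A / Q) = Real.log A - Real.log Q := Real.log_div hA0.ne' hQ0.ne'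
  have hlogbA : Real.logb 2 A = Real.log A / Real.log 2 := rfl
  have hlogbQ : Real.logb 2 Q⁻¹ = -Real.log Q / Real.log 2 := by
    rw [Real.logb, Real.log_inv, neg_div]
  have hmain : A * m ≤ A * (Real.logb 2 Q⁻¹ + 2) := mul_le_mul_of_nonneg_left hm' hA0.le
  have heq : -(A * Real.logb 2 A) + (A * Real.log (A / Q) - A + Q) / Real.log 2
      + A / Real.log 2 + 2 * A = A * (Real.logb 2 Q⁻¹ + 2) + Q / Real.log 2 := by
    rw [hlogdiv, hlogbA, hlogbQ]
    field_simp
    ring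
  rw [heq]
  linarith

lemma exists_code (ρ : ℕ → ℕ → ℝ) (n : ℕ) (d : ℝ) (P : Set (Set (Fin n → ℕ)))
    (hP : QPart ρ n d P) (v : (Fin n → ℕ) → ℝ≥0∞) (hv : IsPMF v) :
    ∃ (φ : (Fin n → ℕ) → Fin n → ℕ) (ℓ : (Fin n → ℕ) → ℕ), IsCode ρ n d φ ℓ ∧
      ∀ μn : (Fin n → ℕ) → ℝ≥0∞, IsPMF μn →
        (∑' x, μn x * (ℓ (φ x) : ℝ≥0∞)) ≤ Hpart P μn + Dpart P μn v + 2 := by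
  classical
  obtain ⟨hPart, hQ⟩ := hP
  have hv' : ∑' x : (Fin n → ℕ), v x = 1 := hv
  -- cell map
  have hcell : ∀ x : (Fin n → ℕ), ∃ A : P, x ∈ A.1 ∧ ∀ B : P, x ∈ B.1 → B = A := by
    intro x
    obtain ⟨S, ⟨hSP, hxS⟩, hU⟩ := hPart.2 x
    exact ⟨⟨S, hSP⟩, hxS, fun B hB => Subtype.ext (hU B.1 ⟨B.2, hB⟩)⟩
  choose cell cell_mem cell_uniq using hcell
  -- prototype map
  have hproto : ∀ A : P, ∃ y ∈ A.1, ∀ x ∈ A.1, blockDist ρ n x y ≤ d := fun A => hQ A.1 A.2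
  choose proto proto_mem proto_dist using hproto
  have cell_proto : ∀ A : P, cell (proto A) = A :=
    fun A => (cell_uniq (proto A) A (proto_mem A)).symm
  set φ : (Fin n → ℕ) → (Fin n → ℕ) := fun x => proto (cell x) with hφ
  have φ_fix : ∀ A : P, φ (proto A) = proto A := by
    intro A; rw [hφ]; simp only; rw [cell_proto]
  have proto_inj : Function.Injective proto := by
    intro A B h
    have h1 := cell_proto A
    have h2 := cell_proto B
    rw [h] at h1; rw [h1] at h2; exact h2
  have range_φ : Set.range φ = Set.range proto := by
    apply Set.Subset.antisymm
    · rintro _ ⟨x, rfl⟩; exact ⟨cell x, rfl⟩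
    · rintro _ ⟨A, rfl⟩; exact ⟨proto A, φ_fix A⟩
  -- enumeration of cells
  have : Countable (↥P) := Function.Injective.countable proto_inj
  obtain ⟨ι, ι_inj⟩ := exists_injective_nat (↥P)
  -- perturbed cell masses
  set q : ↥P → ℝ≥0∞ := fun A => measOf v A.1 with hq
  set q' : ↥P → ℝ≥0∞ := fun A => q A / 2 + (2⁻¹ : ℝ≥0∞) ^ (ι A + 2) with hq'
  have hq_le_one : ∀ A, q A ≤ 1 := by
    intro A; rw [hq]; exact le_trans (measOf_le_tsum v A.1) (le_of_eq hv')
  have hq'_pos : ∀ A, q' A ≠ 0 := by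
    intro A
    simp only [hq', ne_eq, add_eq_zero, not_and]
    intro _
    exact pow_ne_zero _ (by simp)
  have hq'_le_one : ∀ A, q' A ≤ 1 := by
    intro A
    have h1 : q A / 2 ≤ 1 / 2 := ENNReal.div_le_div_right (hq_le_one A) 2
    have h2 : (2⁻¹ : ℝ≥0∞) ^ (ι A + 2) ≤ (2⁻¹ : ℝ≥0∞) ^ 1 :=
      pow_le_pow_of_le_one zero_le (ENNReal.inv_le_one.mpr one_le_two) (by omega)
    calc q' A ≤ 1 / 2 + (2⁻¹ : ℝ≥0∞) ^ 1 := add_le_add h1 h2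
      _ = 1 := by rw [pow_one, one_div, ENNReal.inv_two_add_inv_two]
  have hq'_ne_top : ∀ A, q' A ≠ ⊤ := fun A => ne_top_of_le_ne_top ENNReal.one_ne_top (hq'_le_one A)
  have hq'_sum : ∑' A : ↥P, q' A ≤ 1 := by
    rw [hq', ENNReal.tsum_add]
    have hsq : ∑' A : ↥P, q A = 1 := by
      rw [hq]
      simp only
      rw [← tsum_partition hPart v]
      exact hv'
    have h1 : ∑' A : ↥P, q A / 2 = 2⁻¹ := by
      simp only [div_eq_mul_inv]
      rw [ENNReal.tsum_mul_right, hsq, one_mul]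
    have h2 : ∑' A : ↥P, (2⁻¹ : ℝ≥0∞) ^ (ι A + 2) ≤ 2⁻¹ := by
      have hle : ∑' A : ↥P, (2⁻¹ : ℝ≥0∞) ^ (ι A + 2) ≤ ∑' k : ℕ, (2⁻¹ : ℝ≥0∞) ^ (k + 2) :=
        ENNReal.tsum_comp_le_tsum_of_injective ι_inj (fun k => (2⁻¹ : ℝ≥0∞) ^ (k + 2))
      have hgeo : ∑' k : ℕ, (2⁻¹ : ℝ≥0∞) ^ (k + 2) = 2⁻¹ := by
        simp only [pow_add]
        rw [ENNReal.tsum_mul_right, ENNReal.tsum_geometric, ENNReal.one_sub_inv_two, inv_inv,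
          sq, ← mul_assoc, ENNReal.mul_inv_cancel (by norm_num) (by norm_num), one_mul]
      exact le_trans hle (le_of_eq hgeo)
    rw [h1]
    calc 2⁻¹ + ∑' A : ↥P, (2⁻¹ : ℝ≥0∞) ^ (ι A + 2) ≤ 2⁻¹ + 2⁻¹ := add_le_add le_rfl h2
      _ = 1 := ENNReal.inv_two_add_inv_two
  -- length function
  set L : ↥P → ℕ := fun A => ⌈Real.logb 2 ((q' A).toReal)⁻¹⌉₊ with hLdef
  have hr_pos : ∀ A, 0 < (q' A).toReal := fun A => ENNReal.toReal_pos (hq'_pos A) (hq'_ne_top A)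
  have hr_le : ∀ A, (q' A).toReal ≤ 1 := by
    intro A
    rw [← ENNReal.toReal_one]
    exact ENNReal.toReal_mono ENNReal.one_ne_top (hq'_le_one A)
  have hlogb_nonneg : ∀ A, 0 ≤ Real.logb 2 ((q' A).toReal)⁻¹ := by
    intro A
    exact Real.logb_nonneg one_lt_two (one_le_inv_iff₀.mpr ⟨hr_pos A, hr_le A⟩)
  -- Kraft per cell
  have hkraft_cell : ∀ A, (2⁻¹ : ℝ≥0∞) ^ L A ≤ q' A := by
    intro A
    set r := (q' A).toReal
    have h1 : Real.logb 2 r⁻¹ ≤ (L A : ℝ) := Nat.le_ceil _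
    have h2 : r⁻¹ ≤ (2 : ℝ) ^ (L A : ℝ) :=
      (Real.logb_le_iff_le_rpow one_lt_two (inv_pos.mpr (hr_pos A))).mp h1
    rw [Real.rpow_natCast] at h2
    have h3 : ((2 : ℝ)⁻¹) ^ (L A) ≤ r := by
      rw [inv_pow]
      have := inv_anti₀ (inv_pos.mpr (hr_pos A)) h2
      rwa [inv_inv] at this
    calc (2⁻¹ : ℝ≥0∞) ^ L A = ENNReal.ofReal ((2 : ℝ)⁻¹ ^ L A) := by
          rw [ENNReal.ofReal_pow (by norm_num), ENNReal.ofReal_inv_of_pos two_pos,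
            ENNReal.ofReal_ofNat]
      _ ≤ ENNReal.ofReal r := ENNReal.ofReal_le_ofReal h3
      _ = q' A := ENNReal.ofReal_toReal (hq'_ne_top A)
  -- length upper bound
  have hlen : ∀ A, q A ≠ 0 → (L A : ℝ) ≤ Real.logb 2 ((q A).toReal)⁻¹ + 2 := by
    intro A hA0
    have hqf : q A ≠ ⊤ := ne_top_of_le_ne_top ENNReal.one_ne_top (hq_le_one A)
    have hQ0 : 0 < (q A).toReal := ENNReal.toReal_pos hA0 hqf
    have hhalf : (q A).toReal / 2 ≤ (q' A).toReal := by
      rw [show ((q A).toReal / 2 = (q A / 2).toReal) by rw [ENNReal.toReal_div]; norm_num]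
      exact ENNReal.toReal_mono (hq'_ne_top A) (le_add_right le_rfl)
    have hceil : (L A : ℝ) < Real.logb 2 ((q' A).toReal)⁻¹ + 1 :=
      Nat.ceil_lt_add_one (hlogb_nonneg A)
    have hmono : Real.logb 2 ((q' A).toReal)⁻¹ ≤ Real.logb 2 (2 * ((q A).toReal)⁻¹) := by
      apply Real.logb_le_logb_of_le one_lt_two (inv_pos.mpr (hr_pos A))
      rw [show (2 * ((q A).toReal)⁻¹ = ((q A).toReal / 2)⁻¹) by field_simp]
      exact inv_anti₀ (by positivity) hhalf
    have hsplit : Real.logb 2 (2 * ((q A).toReal)⁻¹) = 1 + Real.logb 2 ((q A).toReal)⁻¹ := by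
      rw [Real.logb_mul (by norm_num) (by positivity), Real.logb_self_eq_one (by norm_num)]
    linarith
  -- the code
  refine ⟨φ, fun y => L (cell y), ⟨?_, ?_, ?_⟩, ?_⟩
  · intro x
    exact proto_dist (cell x) x (cell_mem x)
  · rintro y hy
    rw [range_φ] at hy
    obtain ⟨A, rfl⟩ := hy
    exact φ_fix A
  · unfold Kraft
    rw [range_φ]
    rw [tsum_range (fun y => (2⁻¹ : ℝ≥0∞) ^ L (cell y)) proto_inj]
    calc ∑' A : ↥P, (2⁻¹ : ℝ≥0∞) ^ L (cell (proto A))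
        = ∑' A : ↥P, (2⁻¹ : ℝ≥0∞) ^ L A := by
          exact tsum_congr fun A => by rw [cell_proto]
      _ ≤ ∑' A : ↥P, q' A := ENNReal.tsum_le_tsum fun A => hkraft_cell A
      _ ≤ 1 := hq'_sum
  · intro μn hμn
    have hcellφ : ∀ x, cell (φ x) = cell x := by
      intro x; rw [hφ]; simp only; rw [cell_proto]
    have hdecomp : (∑' x, μn x * (L (cell (φ x)) : ℝ≥0∞))
        = ∑' A : ↥P, measOf μn A.1 * (L A : ℝ≥0∞) := by
      rw [tsum_partition hPart (fun x => μn x * (L (cell (φ x)) : ℝ≥0∞))]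
      apply tsum_congr
      intro A
      unfold measOf
      rw [← ENNReal.tsum_mul_right]
      apply tsum_congr
      rintro ⟨x, hx⟩
      show μn x * (L (cell (φ x)) : ℝ≥0∞) = μn x * (L A : ℝ≥0∞)
      rw [hcellφ x, ← cell_uniq x A hx]
    rw [hdecomp]
    -- cell masses
    have ha_le_one : ∀ A : ↥P, measOf μn A.1 ≤ 1 :=
      fun A => le_trans (measOf_le_tsum μn A.1) (le_of_eq hμn)
    have ha_sum : ∑' A : ↥P, measOf μn A.1 = 1 := by
      rw [← tsum_partition hPart μn]; exact hμn
    set c : ℝ≥0∞ := ENNReal.ofReal (Real.log 2)⁻¹ with hc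
    have hLpos : (0:ℝ) < Real.log 2 := Real.log_pos one_lt_two
    have hcf : c ≠ ⊤ := ENNReal.ofReal_ne_top
    -- of the per-cell inequality
    have hper : ∀ A : ↥P,
        measOf μn A.1 * (L A : ℝ≥0∞) + ENNReal.ofReal ((q A).toReal / Real.log 2)
          ≤ entTerm (measOf μn A.1) + klTerm (measOf μn A.1) (q A)
            + ENNReal.ofReal ((measOf μn A.1).toReal / Real.log 2) + 2 * measOf μn A.1 := by
      intro A
      exact cell_ineq (measOf μn A.1) (q A) (ha_le_one A) (hq_le_one A) (L A) (hlen A)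
    -- convert ofReal terms
    have hofq : ∀ A : ↥P, ENNReal.ofReal ((q A).toReal / Real.log 2) = q A * c := by
      intro A
      have hqf : q A ≠ ⊤ := ne_top_of_le_ne_top ENNReal.one_ne_top (hq_le_one A)
      rw [div_eq_mul_inv, ENNReal.ofReal_mul ENNReal.toReal_nonneg,
        ENNReal.ofReal_toReal hqf, hc]
    have hofa : ∀ A : ↥P, ENNReal.ofReal ((measOf μn A.1).toReal / Real.log 2)
        = measOf μn A.1 * c := by
      intro A
      have haf : measOf μn A.1 ≠ ⊤ := ne_top_of_le_ne_top ENNReal.one_ne_top (ha_le_one A)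
      rw [div_eq_mul_inv, ENNReal.ofReal_mul ENNReal.toReal_nonneg,
        ENNReal.ofReal_toReal haf, hc]
    -- sum it up
    have hsum := ENNReal.tsum_le_tsum hper
    rw [ENNReal.tsum_add] at hsum
    rw [ENNReal.tsum_add, ENNReal.tsum_add, ENNReal.tsum_add] at hsum
    have e1 : ∑' A : ↥P, ENNReal.ofReal ((q A).toReal / Real.log 2) = c := by
      rw [tsum_congr hofq, ENNReal.tsum_mul_right]
      have : ∑' A : ↥P, q A = 1 := by
        rw [hq]; simp only; rw [← tsum_partition hPart v]; exact hv'
      rw [this, one_mul]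
    have e2 : ∑' A : ↥P, ENNReal.ofReal ((measOf μn A.1).toReal / Real.log 2) = c := by
      rw [tsum_congr hofa, ENNReal.tsum_mul_right, ha_sum, one_mul]
    have e3 : ∑' A : ↥P, 2 * measOf μn A.1 = 2 := by
      rw [ENNReal.tsum_mul_left, ha_sum, mul_one]
    rw [e1, e2, e3] at hsum
    have hH : ∑' A : ↥P, entTerm (measOf μn A.1) = Hpart P μn := rfl
    have hD : ∑' A : ↥P, klTerm (measOf μn A.1) (q A) = Dpart P μn v := rfl
    rw [hH, hD] at hsum
    -- cancel c
    have : (∑' A : ↥P, measOf μn A.1 * (L A : ℝ≥0∞)) + c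
        ≤ (Hpart P μn + Dpart P μn v + 2) + c := by
      calc (∑' A : ↥P, measOf μn A.1 * (L A : ℝ≥0∞)) + c
          ≤ Hpart P μn + Dpart P μn v + c + 2 := hsum
        _ = (Hpart P μn + Dpart P μn v + 2) + c := by ring
    exact (ENNReal.add_le_add_iff_right hcf).mp this

lemma tsub_add_le (x y z : ℝ≥0∞) : (x + y) - z ≤ (x - z) + y := by
  rw [tsub_le_iff_right]
  calc x + y ≤ (x - z + z) + y := add_le_add_left le_tsub_add y
    _ = x - z + y + z := by ring

lemma div_tsub_le (H op : ℝ≥0∞) {n : ℕ} (hn : 1 ≤ n) :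
    H / (n : ℝ≥0∞) - op ≤ (H - (n : ℝ≥0∞) * op) / (n : ℝ≥0∞) := by
  have hn0 : (n : ℝ≥0∞) ≠ 0 := Nat.cast_ne_zero.mpr (by omega)
  have hnt : (n : ℝ≥0∞) ≠ ⊤ := ENNReal.natCast_ne_top n
  rw [tsub_le_iff_right]
  have hop : op = ((n : ℝ≥0∞) * op) / (n : ℝ≥0∞) := by
    rw [mul_comm, mul_div_assoc, ENNReal.div_self hn0 hnt, mul_one]
  nth_rewrite 2 [hop]
  rw [ENNReal.div_add_div_same]
  exact ENNReal.div_le_div_right le_tsub_add _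

lemma const_div_tendsto (cst : ℝ≥0∞) (hc : cst ≠ ⊤) :
    Tendsto (fun n : ℕ => cst / (n : ℝ≥0∞)) atTop (𝓝 0) := by
  have := ENNReal.Tendsto.const_mul (a := cst) ENNReal.tendsto_inv_nat_nhds_zero (Or.inr hc)
  simpa [div_eq_mul_inv] using this

lemma exists_mixture {β : Type*} [Nonempty β] (Λn : Set (β → ℝ≥0∞)) (π : Set (Set β)) :
    ∃ v : β → ℝ≥0∞, IsPMF v ∧ ∀ μn ∈ Λn, Dpart π μn v ≤ Rplus Λn π + 1 := by
  classical
  obtain ⟨b0⟩ := ‹Nonempty β›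
  have hpmf : IsPMF (fun y : β => if y = b0 then (1 : ℝ≥0∞) else 0) := by
    unfold IsPMF
    exact tsum_ite_eq b0 1
  rcases eq_or_ne (Rplus Λn π) ⊤ with htop | hfin
  · exact ⟨_, hpmf, fun μn _ => by rw [htop]; simp⟩
  · have hlt : Rplus Λn π < Rplus Λn π + 1 :=
      ENNReal.lt_add_right hfin one_ne_zero
    rw [Rplus, iInf_lt_iff] at hlt
    obtain ⟨v, hv⟩ := hlt
    refine ⟨v.1, v.2, fun μn hμn => ?_⟩
    exact le_trans (le_biSup (fun μn => Dpart π μn v.1) hμn) hv.le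

end AuxLemmas

/-- Sufficiency for strong minimax universality: if there is a sequence of
partitions `π_n ∈ Q_n(d)` with `(1/n)·R⁺(Λ^n, σ(π_n)) → 0` and
`(1/n)·sup_{μ ∈ Λ}[H_{σ(π_n)}(μ^n) − n·R_n(d, μ^n)] → 0`, then there is a D-semifaithful
coding scheme at distortion `d` that is strongly minimax universal for `Λ`. -/
theorem sufficiency_strong_minimax (ρ : ℕ → ℕ → ℝ) (hρ : IsDistortion ρ)
    (d : ℝ) (hd : 0 < d)
    (Λ : Set (ℕ → ℝ≥0∞)) (hΛ : ∀ μ ∈ Λ, IsPMF μ)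
    (π : ∀ n : ℕ, Set (Set (Fin n → ℕ)))
    (h1 : ∀ n : ℕ, 1 ≤ n → QPart ρ n d (π n))
    (h2 : Tendsto (fun n : ℕ => Rplus (prodFam Λ n) (π n) / (n : ℝ≥0∞)) atTop (𝓝 0))
    (h3 : Tendsto (fun n : ℕ =>
        (⨆ μ ∈ Λ, (Hpart (π n) (prodPMF μ n) - (n : ℝ≥0∞) * opRate ρ n d (prodPMF μ n)))
          / (n : ℝ≥0∞)) atTop (𝓝 0)) :
    ∃ (φ : ∀ n : ℕ, (Fin n → ℕ) → Fin n → ℕ) (ℓ : ∀ n : ℕ, (Fin n → ℕ) → ℕ),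
      (∀ n : ℕ, 1 ≤ n → IsCode ρ n d (φ n) (ℓ n)) ∧
      Tendsto (fun n : ℕ =>
          ⨆ μ ∈ Λ, (codeRate (φ n) (ℓ n) (prodPMF μ n) - opRate ρ n d (prodPMF μ n)))
        atTop (𝓝 0) := by
  classical
  -- choose near-optimal mixtures and codes
  have key : ∀ n : ℕ, ∃ (φn : (Fin n → ℕ) → Fin n → ℕ) (ℓn : (Fin n → ℕ) → ℕ),
      (1 ≤ n → IsCode ρ n d φn ℓn) ∧
      (1 ≤ n → ∀ μ ∈ Λ, codeRate φn ℓn (prodPMF μ n)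
        ≤ (Hpart (π n) (prodPMF μ n) + (Rplus (prodFam Λ n) (π n) + 1) + 2) / (n : ℝ≥0∞)) := by
    intro n
    by_cases hn : 1 ≤ n
    · obtain ⟨v, hvPMF, hvD⟩ := exists_mixture (prodFam Λ n) (π n)
      obtain ⟨φn, ℓn, hcode, hbound⟩ := exists_code ρ n d (π n) (h1 n hn) v hvPMF
      refine ⟨φn, ℓn, fun _ => hcode, fun _ μ hμ => ?_⟩
      have hb := hbound (prodPMF μ n) (isPMF_prod (hΛ μ hμ) n)
      have hD : Dpart (π n) (prodPMF μ n) v ≤ Rplus (prodFam Λ n) (π n) + 1 :=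
        hvD (prodPMF μ n) ⟨μ, hμ, rfl⟩
      unfold codeRate
      apply ENNReal.div_le_div_right
      calc (∑' x, prodPMF μ n x * (ℓn (φn x) : ℝ≥0∞))
          ≤ Hpart (π n) (prodPMF μ n) + Dpart (π n) (prodPMF μ n) v + 2 := hb
        _ ≤ Hpart (π n) (prodPMF μ n) + (Rplus (prodFam Λ n) (π n) + 1) + 2 := by
            exact add_le_add (add_le_add le_rfl hD) le_rfl
    · exact ⟨id, fun _ => 0, fun h => absurd h hn, fun h => absurd h hn⟩
  choose φ ℓ hcode hrate using key
  refine ⟨φ, ℓ, fun n hn => hcode n hn, ?_⟩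
  -- the dominating sequence
  set G : ℕ → ℝ≥0∞ := fun n =>
    (⨆ μ ∈ Λ, (Hpart (π n) (prodPMF μ n) - (n : ℝ≥0∞) * opRate ρ n d (prodPMF μ n)))
      / (n : ℝ≥0∞)
    + (Rplus (prodFam Λ n) (π n) / (n : ℝ≥0∞) + ((1 : ℝ≥0∞) / n + (2 : ℝ≥0∞) / n)) with hG
  have hGlim : Tendsto G atTop (𝓝 0) := by
    rw [hG]
    have l1 : Tendsto (fun n : ℕ => (1 : ℝ≥0∞) / (n : ℝ≥0∞)) atTop (𝓝 0) :=
      const_div_tendsto 1 ENNReal.one_ne_top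
    have l2 : Tendsto (fun n : ℕ => (2 : ℝ≥0∞) / (n : ℝ≥0∞)) atTop (𝓝 0) :=
      const_div_tendsto 2 ENNReal.ofNat_ne_top
    have := h3.add (h2.add (l1.add l2))
    simpa using this
  -- pointwise eventual bound
  have hbound : ∀ n : ℕ, 1 ≤ n →
      (⨆ μ ∈ Λ, (codeRate (φ n) (ℓ n) (prodPMF μ n) - opRate ρ n d (prodPMF μ n))) ≤ G n := by
    intro n hn
    apply iSup₂_le
    intro μ hμ
    have hr := hrate n hn μ hμ
    set H := Hpart (π n) (prodPMF μ n)
    set R := Rplus (prodFam Λ n) (π n)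
    set op := opRate ρ n d (prodPMF μ n)
    calc codeRate (φ n) (ℓ n) (prodPMF μ n) - op
        ≤ (H + (R + 1) + 2) / (n : ℝ≥0∞) - op := tsub_le_tsub_right hr op
      _ = (H / n + ((R + 1) / n + 2 / n)) - op := by
          rw [ENNReal.add_div, ENNReal.add_div, add_assoc]
      _ ≤ (H / n - op) + ((R + 1) / n + 2 / n) := tsub_add_le _ _ _
      _ ≤ (H - (n : ℝ≥0∞) * op) / n + ((R + 1) / n + 2 / n) :=
          add_le_add (div_tsub_le H op hn) le_rfl
      _ ≤ G n := by
          rw [hG]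
          apply add_le_add
          · apply ENNReal.div_le_div_right
            exact le_biSup (fun μ => Hpart (π n) (prodPMF μ n)
              - (n : ℝ≥0∞) * opRate ρ n d (prodPMF μ n)) hμ
          · rw [ENNReal.add_div, add_assoc]
  -- squeeze
  apply tendsto_of_tendsto_of_tendsto_of_le_of_le' tendsto_const_nhds hGlim
  · exact Eventually.of_forall fun n => zero_le
  · filter_upwards [eventually_ge_atTop 1] with n hn
    exact hbound n hn
end
end

section
/- (Infinite projected information radius for non-summable envelopes.) Let ρ be an unbounded distortion function that is consistent with respect to the Euclidean norm, and let f : X → [0,∞) with ∑_{x ∈ X} f(x) = ∞. Then for every d > 0, every n ≥ 1, and every partition π ∈ Q_n(d), the projected information radius is infinite: R⁺(Λ_f^n, σ(π)) = inf_{v ∈ P(X^n)} sup_{μ ∈ Λ_f} D_{σ(π)}(μ^n‖v) = +∞. -/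
open Filter Topology
open scoped ENNReal NNReal BigOperators

noncomputable section

section AuxiliaryLemmas
lemma log_ge_one_sub_inv {z : ℝ} (hz : 0 < z) : 1 - z⁻¹ ≤ Real.log z := by
  have h := Real.log_le_sub_one_of_pos (inv_pos.2 hz)
  rw [Real.log_inv] at h
  linarith

lemma g_nonneg {a b : ℝ} (ha : 0 < a) (hb : 0 < b) :
    0 ≤ a * Real.log (a / b) - a + b := by
  have h := log_ge_one_sub_inv (div_pos ha hb)
  have : (a / b)⁻¹ = b / a := by field_simp
  rw [this] at h
  have h2 : a * (1 - b / a) ≤ a * Real.log (a / b) := by nlinarith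
  have : a * (1 - b / a) = a - b := by field_simp
  linarith [this ▸ h2]

lemma logsum {a₁ a₂ b₁ b₂ : ℝ} (ha₁ : 0 < a₁) (ha₂ : 0 < a₂) (hb₁ : 0 < b₁) (hb₂ : 0 < b₂) :
    (a₁ + a₂) * Real.log ((a₁ + a₂) / (b₁ + b₂)) ≤
      a₁ * Real.log (a₁ / b₁) + a₂ * Real.log (a₂ / b₂) := by
  set s := a₁ + a₂ with hs
  set t := b₁ + b₂ with ht
  have hspos : 0 < s := by positivity
  have htpos : 0 < t := by positivity
  have key : ∀ a b : ℝ, 0 < a → 0 < b →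
      a * Real.log (s / t) + (a - b * (s / t)) ≤ a * Real.log (a / b) := by
    intro a b ha hb
    have hz : 0 < a * t / (b * s) := by positivity
    have hlog : Real.log (a / b) = Real.log (s / t) + Real.log (a * t / (b * s)) := by
      rw [← Real.log_mul (by positivity) (ne_of_gt hz)]
      congr 1; field_simp
    have h2 : 1 - (a * t / (b * s))⁻¹ ≤ Real.log (a * t / (b * s)) := log_ge_one_sub_inv hz
    have hinv : (a * t / (b * s))⁻¹ = b * s / (a * t) := by field_simp
    rw [hinv] at h2
    have heq : a * (1 - b * s / (a * t)) = a - b * (s / t) := by field_simp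
    have h3 : a * (1 - b * s / (a * t)) ≤ a * Real.log (a * t / (b * s)) := by nlinarith
    rw [heq] at h3
    rw [hlog]
    linarith
  have k1 := key a₁ b₁ ha₁ hb₁
  have k2 := key a₂ b₂ ha₂ hb₂
  have hsum : (a₁ - b₁ * (s / t)) + (a₂ - b₂ * (s / t)) = 0 := by
    field_simp; ring
  nlinarith [k1, k2]

lemma measOf_mono {α : Type*} (p : α → ℝ≥0∞) {s t : Set α} (h : s ⊆ t) :
    measOf p s ≤ measOf p t := by
  unfold measOf
  exact ENNReal.summable.tsum_le_tsum_of_inj (Set.inclusion h) (Set.inclusion_injective h)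
    (fun _ _ => zero_le) (fun a => le_rfl) ENNReal.summable

lemma measOf_biUnion {α ι : Type*} (p : α → ℝ≥0∞) (T : Finset ι) (s : ι → Set α)
    (hd : (T : Set ι).Pairwise (Function.onFun Disjoint s)) :
    measOf p (⋃ i ∈ T, s i) = ∑ i ∈ T, measOf p (s i) :=
  Summable.tsum_finset_bUnion_disjoint hd (fun _ _ => ENNReal.summable)


lemma tsum_prodPMF {α : Type*} (p : α → ℝ≥0∞) (n : ℕ) :
    ∑' x : Fin n → α, (∏ i, p (x i)) = (∑' a, p a) ^ n := by
  induction n with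
  | zero =>
      simp [tsum_eq_single (default : Fin 0 → α) (fun b hb => absurd (Subsingleton.elim b default) hb)]
  | succ n ih =>
      rw [← (Fin.consEquiv (fun _ : Fin (n+1) => α)).tsum_eq]
      have : ∀ y : α × (Fin n → α),
          (∏ i, p ((Fin.consEquiv (fun _ : Fin (n+1) => α)) y i)) = p y.1 * ∏ i, p (y.2 i) := by
        rintro ⟨a, g⟩
        simp [Fin.consEquiv, Fin.prod_univ_succ]
      rw [tsum_congr this, ENNReal.tsum_prod']
      simp_rw [ENNReal.tsum_mul_left]
      rw [ENNReal.tsum_mul_right, ih, pow_succ]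
      ring

lemma log2pos : (0:ℝ) < Real.log 2 := Real.log_pos (by norm_num)

lemma klTerm_helper {a b c : ℝ≥0∞} (ha0 : a ≠ 0) (ha : a ≠ ⊤) (hb : b ≠ ⊤) (hc : c ≠ ⊤) :
    klTerm a (b + c) ≤ klTerm a b + ENNReal.ofReal (c.toReal / Real.log 2) := by
  rcases eq_or_ne b 0 with hb0 | hb0
  · simp [klTerm, ha0, hb0]
  · have hbc0 : b + c ≠ 0 := by simp [hb0]
    rw [klTerm, if_neg ha0, if_neg hbc0, klTerm, if_neg ha0, if_neg hb0]
    have hbc : (b + c).toReal = b.toReal + c.toReal := ENNReal.toReal_add hb hc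
    have hap : 0 < a.toReal := ENNReal.toReal_pos ha0 ha
    have hbp : 0 < b.toReal := ENNReal.toReal_pos hb0 hb
    have hcp : 0 ≤ c.toReal := ENNReal.toReal_nonneg
    have hg : 0 ≤ (a.toReal * Real.log (a.toReal / b.toReal) - a.toReal + b.toReal) / Real.log 2 :=
      div_nonneg (g_nonneg hap hbp) log2pos.le
    rw [← ENNReal.ofReal_add hg (by positivity), hbc]
    apply ENNReal.ofReal_le_ofReal
    rw [← add_div]
    have hlog : Real.log (a.toReal / (b.toReal + c.toReal)) ≤ Real.log (a.toReal / b.toReal) := by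
      have h1 : a.toReal / (b.toReal + c.toReal) ≤ a.toReal / b.toReal := by
        apply div_le_div_of_nonneg_left hap.le hbp
        linarith
      exact Real.log_le_log (by positivity) h1
    have h2 : a.toReal * Real.log (a.toReal / (b.toReal + c.toReal))
        ≤ a.toReal * Real.log (a.toReal / b.toReal) :=
      mul_le_mul_of_nonneg_left hlog hap.le
    gcongr ?_ / Real.log 2
    linarith

lemma klTerm_zero (b : ℝ≥0∞) : klTerm 0 b = ENNReal.ofReal (b.toReal / Real.log 2) := by
  simp [klTerm]

lemma klTerm_add_add {a₁ a₂ b₁ b₂ : ℝ≥0∞} (ha₁ : a₁ ≠ ⊤) (ha₂ : a₂ ≠ ⊤)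
    (hb₁ : b₁ ≠ ⊤) (hb₂ : b₂ ≠ ⊤) :
    klTerm (a₁ + a₂) (b₁ + b₂) ≤ klTerm a₁ b₁ + klTerm a₂ b₂ := by
  rcases eq_or_ne a₁ 0 with h1 | h1
  · rcases eq_or_ne a₂ 0 with h2 | h2
    · rw [h1, h2, add_zero, klTerm_zero, klTerm_zero, klTerm_zero,
        ENNReal.toReal_add hb₁ hb₂, add_div,
        ENNReal.ofReal_add (by positivity) (by positivity)]
    · rw [h1, zero_add, add_comm b₁ b₂, klTerm_zero]
      refine le_trans (klTerm_helper h2 ha₂ hb₂ hb₁) ?_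
      rw [add_comm]
  · rcases eq_or_ne a₂ 0 with h2 | h2
    · rw [h2, add_zero, klTerm_zero]
      exact klTerm_helper h1 ha₁ hb₁ hb₂
    · rcases eq_or_ne b₁ 0 with hbz1 | hbz1
      · have : klTerm a₁ b₁ = ⊤ := by simp [klTerm, h1, hbz1]
        simp [this]
      rcases eq_or_ne b₂ 0 with hbz2 | hbz2
      · have : klTerm a₂ b₂ = ⊤ := by simp [klTerm, h2, hbz2]
        simp [this]
      · have hs0 : a₁ + a₂ ≠ 0 := by simp [h1]
        have ht0 : b₁ + b₂ ≠ 0 := by simp [hbz1]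
        rw [klTerm, if_neg hs0, if_neg ht0, klTerm, if_neg h1, if_neg hbz1,
          klTerm, if_neg h2, if_neg hbz2]
        have ha₁p : 0 < a₁.toReal := ENNReal.toReal_pos h1 ha₁
        have ha₂p : 0 < a₂.toReal := ENNReal.toReal_pos h2 ha₂
        have hb₁p : 0 < b₁.toReal := ENNReal.toReal_pos hbz1 hb₁
        have hb₂p : 0 < b₂.toReal := ENNReal.toReal_pos hbz2 hb₂
        rw [ENNReal.toReal_add ha₁ ha₂, ENNReal.toReal_add hb₁ hb₂]
        rw [← ENNReal.ofReal_add (div_nonneg (g_nonneg ha₁p hb₁p) log2pos.le)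
          (div_nonneg (g_nonneg ha₂p hb₂p) log2pos.le)]
        apply ENNReal.ofReal_le_ofReal
        rw [← add_div]
        gcongr ?_ / Real.log 2
        have := logsum ha₁p ha₂p hb₁p hb₂p
        linarith

lemma klTerm_sum {ι : Type*} (T : Finset ι) (a b : ι → ℝ≥0∞)
    (ha : ∀ i ∈ T, a i ≠ ⊤) (hb : ∀ i ∈ T, b i ≠ ⊤) :
    klTerm (∑ i ∈ T, a i) (∑ i ∈ T, b i) ≤ ∑ i ∈ T, klTerm (a i) (b i) := by
  classical
  induction T using Finset.induction_on with
  | empty => simp [klTerm]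
  | @insert j T hj ih =>
      rw [Finset.sum_insert hj, Finset.sum_insert hj, Finset.sum_insert hj]
      refine le_trans (klTerm_add_add (ha j (Finset.mem_insert_self j T))
        (by exact (ENNReal.sum_lt_top.2 fun i hi => (ha i (Finset.mem_insert_of_mem hi)).lt_top).ne)
        (hb j (Finset.mem_insert_self j T))
        (by exact (ENNReal.sum_lt_top.2 fun i hi => (hb i (Finset.mem_insert_of_mem hi)).lt_top).ne)) ?_
      gcongr
      exact ih (fun i hi => ha i (Finset.mem_insert_of_mem hi))
        (fun i hi => hb i (Finset.mem_insert_of_mem hi))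

lemma klTerm_one_lower (M : ℕ) {B : ℝ≥0∞}
    (hB : B ≤ ENNReal.ofReal (Real.exp (-((M:ℝ) * Real.log 2 + 1)))) :
    (M : ℝ≥0∞) ≤ klTerm 1 B := by
  rcases eq_or_ne B 0 with h | h
  · simp [klTerm, h]
  · have hBtop : B ≠ ⊤ := (hB.trans_lt ENNReal.ofReal_lt_top).ne
    rw [klTerm, if_neg one_ne_zero, if_neg h]
    have hBp : 0 < B.toReal := ENNReal.toReal_pos h hBtop
    have hBle : B.toReal ≤ Real.exp (-((M:ℝ) * Real.log 2 + 1)) := by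
      have := ENNReal.toReal_mono ENNReal.ofReal_ne_top hB
      rwa [ENNReal.toReal_ofReal (Real.exp_pos _).le] at this
    have hlogB : Real.log B.toReal ≤ -((M:ℝ) * Real.log 2 + 1) := by
      calc Real.log B.toReal ≤ Real.log (Real.exp (-((M:ℝ) * Real.log 2 + 1))) :=
            Real.log_le_log hBp hBle
        _ = _ := Real.log_exp _
    rw [← ENNReal.ofReal_natCast M]
    apply ENNReal.ofReal_le_ofReal
    rw [ENNReal.toReal_one, le_div_iff₀ log2pos]
    have h1 : Real.log (1 / B.toReal) = - Real.log B.toReal := by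
      rw [one_div, Real.log_inv]
    rw [h1]
    nlinarith

end AuxiliaryLemmas

/-- Infinite projected information radius for non-summable envelopes: if `ρ` is
an unbounded distortion consistent with the Euclidean norm and `∑_x f(x) = ∞`, then for every
`d > 0`, `n ≥ 1` and every partition `π ∈ Q_n(d)`,
`R⁺(Λ_f^n, σ(π)) = inf_{v ∈ P(X^n)} sup_{μ ∈ Λ_f} D_{σ(π)}(μ^n‖v) = ∞`. -/

theorem infinite_projected_radius (ρ : ℕ → ℕ → ℝ) (hρ : IsDistortion ρ)
    (hcons : ConsistentUnbounded ρ)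
    (f : ℕ → ℝ≥0) (hf : (∑' x, (f x : ℝ≥0∞)) = ⊤)
    (d : ℝ) (hd : 0 < d) (n : ℕ) (hn : 1 ≤ n)
    (π : Set (Set (Fin n → ℕ))) (hπ : QPart ρ n d π) :
    Rplus (prodFam (envFam f) n) π = ⊤ := by
  classical
  obtain ⟨hpart, hproto⟩ := hπ
  have hn0 : 0 < n := hn
  -- consistency: cells have bounded "diameter"
  obtain ⟨ε, hε, hK⟩ := hcons ((n:ℝ) * d + 1) (by positivity)
  set c : ℕ := ⌈2 * ε⌉₊ with hc
  have hcell_sub : ∀ A ∈ π, ∀ m : ℕ, ∀ x ∈ A, (∀ i, m + c ≤ x i) →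
      ∀ x' ∈ A, ∀ i, m ≤ x' i := by
    intro A hA m x hx hxk x' hx' i
    obtain ⟨y, hyA, hy⟩ := hproto A hA
    have hterm : ∀ z ∈ A, ∀ j : Fin n, |(z j : ℝ) - (y j : ℝ)| < ε := by
      intro z hz j
      by_contra hcon
      push_neg at hcon
      have h1 := hK (z j) (y j) hcon
      have hbd := hy z hz
      unfold blockDist at hbd
      rw [div_le_iff₀ (by exact_mod_cast hn0)] at hbd
      have hsingle : ρ (z j) (y j) ≤ ∑ i, ρ (z i) (y i) :=
        Finset.single_le_sum (fun i _ => hρ.1 _ _) (Finset.mem_univ j)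
      nlinarith
    have h1 := abs_lt.1 (hterm x hx i)
    have h2 := abs_lt.1 (hterm x' hx' i)
    have hki : ((m + c : ℕ) : ℝ) ≤ (x i : ℝ) := by exact_mod_cast hxk i
    push_cast at hki
    have hcge : 2 * ε ≤ (c : ℝ) := Nat.le_ceil _
    have : (m : ℝ) ≤ (x' i : ℝ) := by linarith
    exact_mod_cast this
  -- reduce to: for each pmf v, the sup is ⊤
  rw [Rplus, iInf_eq_top]
  intro v
  rw [eq_top_iff, ← ENNReal.iSup_natCast]
  refine iSup_le fun M => ?_
  -- small tail of v
  set δ : ℝ≥0∞ := ENNReal.ofReal (Real.exp (-((M:ℝ) * Real.log 2 + 1))) with hδdef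
  have hδ : 0 < δ := ENNReal.ofReal_pos.2 (Real.exp_pos _)
  have htail := ENNReal.tendsto_tsum_compl_atTop_zero
    (f := v.1) (by rw [v.2]; exact ENNReal.one_ne_top)
  obtain ⟨F, hF⟩ := (Filter.Tendsto.eventually_lt_const hδ htail).exists
  set i₀ : Fin n := ⟨0, hn0⟩ with hi₀
  set m : ℕ := 1 + ∑ x ∈ F, x i₀ with hm
  set Em : Set (Fin n → ℕ) := {x | ∀ i, m ≤ x i} with hEm
  have hEmδ : measOf v.1 Em < δ := by
    refine lt_of_le_of_lt ?_ hF
    refine le_trans (measOf_mono v.1 (t := {x | x ∉ F}) ?_) ?_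
    · intro x hx hxF
      have h1 : x i₀ ≤ ∑ y ∈ F, y i₀ :=
        Finset.single_le_sum (f := fun y : Fin n → ℕ => y i₀) (fun y _ => Nat.zero_le _) hxF
      have h2 : m ≤ x i₀ := hx i₀
      rw [hm] at h2
      exact absurd (h2.trans h1) (by simp)
    · exact le_of_eq rfl
  set k : ℕ := m + c with hk
  -- tail of f is infinite; extract S
  have htop : ∑' x : Tset k, (f x.1 : ℝ≥0∞) = ⊤ := by
    have hsum := Summable.tsum_add_tsum_compl (s := Tset k)
      (f := fun x => (f x : ℝ≥0∞)) ENNReal.summable ENNReal.summable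
    haveI : Finite ↥(Tset k)ᶜ := Set.Finite.to_subtype
      ((Set.finite_Iio k).subset (by intro x hx; simpa [Tset, not_le] using hx))
    haveI := Fintype.ofFinite ↥(Tset k)ᶜ
    have hcompl : ∑' x : ↥(Tset k)ᶜ, (f x.1 : ℝ≥0∞) ≠ ⊤ := by
      rw [tsum_fintype]
      exact (ENNReal.sum_lt_top.2 fun _ _ => ENNReal.coe_lt_top).ne
    rw [hf] at hsum
    by_contra hcon
    exact (ENNReal.add_ne_top.2 ⟨hcon, hcompl⟩) hsum
  obtain ⟨s, hs⟩ : ∃ s : Finset ↥(Tset k), 1 < ∑ x ∈ s, (f x.1 : ℝ≥0∞) := by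
    rw [ENNReal.tsum_eq_iSup_sum] at htop
    exact lt_iSup_iff.1 (htop ▸ ENNReal.one_lt_top)
  set S : Finset ℕ := s.image Subtype.val with hS
  have hSsum : ∑ x ∈ S, (f x : ℝ≥0∞) = ∑ x ∈ s, (f x.1 : ℝ≥0∞) :=
    Finset.sum_image (fun x _ y _ h => Subtype.val_injective h)
  have hSk : ∀ x ∈ S, k ≤ x := by
    intro x hx
    obtain ⟨y, _, rfl⟩ := Finset.mem_image.1 hx
    exact y.2
  set c₀ : ℝ≥0∞ := ∑ x ∈ S, (f x : ℝ≥0∞) with hc₀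
  have hc₀1 : 1 < c₀ := by rw [hSsum]; exact hs
  have hc₀0 : c₀ ≠ 0 := by positivity
  have hc₀top : c₀ ≠ ⊤ := (ENNReal.sum_lt_top.2 fun _ _ => ENNReal.coe_lt_top).ne
  -- the measure μ
  set μ : ℕ → ℝ≥0∞ := fun x => if x ∈ S then c₀⁻¹ * (f x : ℝ≥0∞) else 0 with hμ
  have hμsum : ∑' x, μ x = 1 := by
    rw [tsum_eq_sum (s := S) (fun x hx => if_neg hx)]
    rw [Finset.sum_congr rfl (fun x hx => if_pos hx), ← Finset.mul_sum, ← hc₀,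
      ENNReal.inv_mul_cancel hc₀0 hc₀top]
  have hμmem : μ ∈ envFam f := by
    refine ⟨hμsum, fun x => ?_⟩
    by_cases hx : x ∈ S
    · simp only [hμ, if_pos hx]
      calc c₀⁻¹ * (f x : ℝ≥0∞) ≤ 1 * (f x : ℝ≥0∞) := by
            gcongr
            exact ENNReal.inv_le_one.2 hc₀1.le
        _ = _ := one_mul _
    · simp [hμ, hx]
  set μn := prodPMF μ n with hμn
  have hμn1 : ∑' x, μn x = 1 := by
    have h := tsum_prodPMF μ n
    rw [hμsum, one_pow] at h
    exact h
  -- cells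
  choose cell hcell using fun x : Fin n → ℕ => (hpart.2 x).exists
  set Sn : Finset (Fin n → ℕ) := Fintype.piFinset (fun _ => S) with hSn
  set T : Finset ↥π := Sn.image (fun x => (⟨cell x, (hcell x).1⟩ : ↥π)) with hT
  have hdisj : ∀ s₁ ∈ π, ∀ t₁ ∈ π, s₁ ≠ t₁ → Disjoint s₁ t₁ := by
    intro s₁ hs₁ t₁ ht₁ hne
    rw [Set.disjoint_left]
    intro x hxs hxt
    exact hne (((hpart.2 x).unique ⟨hs₁, hxs⟩ ⟨ht₁, hxt⟩))
  have hpw : (T : Set ↥π).Pairwise (Function.onFun Disjoint fun t : ↥π => t.1) := by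
    intro a _ b _ hne
    exact hdisj a.1 a.2 b.1 b.2 (fun h => hne (Subtype.ext h))
  have hTsub : ∀ t ∈ T, t.1 ⊆ Em := by
    intro t ht
    obtain ⟨x, hxSn, rfl⟩ := Finset.mem_image.1 ht
    have hxk : ∀ i, m + c ≤ x i := by
      intro i
      exact hSk _ (Fintype.mem_piFinset.1 hxSn i)
    intro x' hx' i
    exact hcell_sub (cell x) (hcell x).1 m x (hcell x).2 hxk x' hx' i
  -- sums over T
  have hUnion : measOf μn (⋃ t ∈ T, (t : Set (Fin n → ℕ))) = 1 := by
    set U : Set (Fin n → ℕ) := ⋃ t ∈ T, (t : Set (Fin n → ℕ)) with hU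
    have hsupp : ∀ x : Fin n → ℕ, x ∉ U → μn x = 0 := by
      intro x hxU
      by_contra hne
      have hxi : ∀ i, x i ∈ S := by
        intro i
        by_contra hxi
        refine hne ?_
        show (∏ j, μ (x j)) = 0
        exact Finset.prod_eq_zero (Finset.mem_univ i) (by simp [hμ, hxi])
      have hxSn : x ∈ Sn := Fintype.mem_piFinset.2 hxi
      exact hxU (Set.mem_biUnion (Finset.mem_image_of_mem _ hxSn) (hcell x).2)
    have hcompl : measOf μn Uᶜ = 0 := by
      rw [measOf]
      rw [tsum_congr (fun x : ↥Uᶜ => hsupp x.1 x.2)]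
      exact tsum_zero
    have := Summable.tsum_add_tsum_compl (s := U) (f := μn) ENNReal.summable ENNReal.summable
    rw [hμn1] at this
    have : measOf μn U + measOf μn Uᶜ = 1 := this
    rwa [hcompl, add_zero] at this
  have haval : ∑ t ∈ T, measOf μn (t : Set (Fin n → ℕ)) = 1 := by
    rw [← measOf_biUnion μn T _ hpw]; exact hUnion
  have hbval : ∑ t ∈ T, measOf v.1 (t : Set (Fin n → ℕ)) ≤ δ := by
    rw [← measOf_biUnion v.1 T _ hpw]
    refine le_trans (measOf_mono v.1 ?_) hEmδ.le
    exact Set.iUnion₂_subset hTsub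
  -- conclude
  have hD : (M : ℝ≥0∞) ≤ Dpart π μn v.1 := by
    calc (M : ℝ≥0∞) ≤ klTerm 1 (∑ t ∈ T, measOf v.1 (t : Set (Fin n → ℕ))) :=
          klTerm_one_lower M hbval
      _ = klTerm (∑ t ∈ T, measOf μn (t : Set (Fin n → ℕ)))
            (∑ t ∈ T, measOf v.1 (t : Set (Fin n → ℕ))) := by rw [haval]
      _ ≤ ∑ t ∈ T, klTerm (measOf μn (t : Set (Fin n → ℕ)))
            (measOf v.1 (t : Set (Fin n → ℕ))) := by
          refine klTerm_sum T _ _ (fun t _ => ?_) (fun t _ => ?_)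
          · exact ((measOf_le_tsum μn _).trans_lt (by rw [hμn1]; exact ENNReal.one_lt_top)).ne
          · exact ((measOf_le_tsum v.1 _).trans_lt (by rw [v.2]; exact ENNReal.one_lt_top)).ne
      _ ≤ ∑' A : ↥π, klTerm (measOf μn A.1) (measOf v.1 A.1) := ENNReal.sum_le_tsum T
      _ = Dpart π μn v.1 := rfl
  exact le_iSup₂_of_le μn ⟨μ, hμmem, rfl⟩ hD
end
end

section
/- (Key inequality behind the maximum-entropy property of the envelope distribution.) Let f : X → [0,∞) with ∑_x f(x) < ∞ and H(μ̃_f) < ∞, where μ̃_f is the envelope distribution and H(μ̃_f) = −∑_x μ̃_f(x) log₂ μ̃_f(x). Then for every k ≥ τ_f with ∑_{x ≥ k+1} f(x) < 1 − ∑_{x ≥ k+1} f(x), and every μ ∈ Λ_f, H_{σ(π̃_k)}(μ̃_f) − H_{σ(π̃_k)}(μ) ≥ ∑_{x ≥ k+1} (f(x) − μ({x}))·log₂( (∑_{y ≥ k+1} f(y)) / f(x) ) ≥ 0. -/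
open Filter Topology
open scoped ENNReal NNReal BigOperators

noncomputable section

/-- Gibbs-type inequality: `a·log(b/a) ≤ b − a`. -/
lemma aux_gibbs {a b : ℝ} (ha : 0 ≤ a) (hb : 0 < b) :
    a * Real.log (b / a) ≤ b - a := by
  rcases eq_or_lt_of_le ha with h0 | ha'
  · simp [← h0]; linarith
  · have h := Real.log_le_sub_one_of_pos (div_pos hb ha')
    have h2 : a * Real.log (b / a) ≤ a * (b / a - 1) :=
      mul_le_mul_of_nonneg_left h ha
    have h3 : a * (b / a - 1) = b - a := by field_simp
    linarith

/-- Tangent-line inequality for `t ↦ −t·ln t` at `v`. -/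
lemma aux_tangent_ln {u v : ℝ} (hu : 0 ≤ u) (hv : 0 < v) :
    -(u * Real.log u) ≤ -(v * Real.log v) + (v - u) * (Real.log v + 1) := by
  rcases eq_or_lt_of_le hu with h0 | hu'
  · simp [← h0]; nlinarith
  · have hlog : Real.log (v / u) = Real.log v - Real.log u :=
      Real.log_div hv.ne' hu'.ne'
    have h2 := aux_gibbs (le_of_lt hu') hv
    rw [hlog] at h2
    nlinarith

/-- Tangent-line inequality for `t ↦ −t·log₂ t` at `v`. -/
lemma aux_tangent {u v : ℝ} (hu : 0 ≤ u) (hv : 0 < v) :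
    -(u * Real.logb 2 u) ≤
      -(v * Real.logb 2 v) + (v - u) * (Real.logb 2 v + 1 / Real.log 2) := by
  have hL : 0 < Real.log 2 := Real.log_pos one_lt_two
  have key := aux_tangent_ln hu hv
  have e1 : -(u * Real.logb 2 u) = (-(u * Real.log u)) / Real.log 2 := by
    rw [Real.logb]; ring
  have e2 : -(v * Real.logb 2 v) + (v - u) * (Real.logb 2 v + 1 / Real.log 2)
      = (-(v * Real.log v) + (v - u) * (Real.log v + 1)) / Real.log 2 := by
    rw [Real.logb]; ring
  rw [e1, e2]
  exact div_le_div_of_nonneg_right key hL.le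

/-- Per-term inequality in `ℝ≥0∞`. -/
lemma aux_perterm (a : ℝ≥0∞) (b : ℝ≥0) (hab : a ≤ (b : ℝ≥0∞)) {Sr γ : ℝ}
    (hbS : (b : ℝ) ≤ Sr) (hSr : Sr < 1)
    (hγ : γ = Real.logb 2 Sr + 1 / Real.log 2) :
    entTerm a + ENNReal.ofReal (((b : ℝ) - a.toReal) * Real.logb 2 (Sr / (b : ℝ)))
      ≤ entTerm (b : ℝ≥0∞) + ENNReal.ofReal (((b : ℝ) - a.toReal) * γ) := by
  have ha_ne : a ≠ ⊤ := (lt_of_le_of_lt hab ENNReal.coe_lt_top).ne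
  set A := a.toReal with hA
  have hA0 : 0 ≤ A := ENNReal.toReal_nonneg
  have hAB : A ≤ (b : ℝ) := by
    have := ENNReal.toReal_mono ENNReal.coe_ne_top hab
    simpa using this
  rcases eq_or_lt_of_le (b.coe_nonneg) with hb0 | hbpos
  · -- b = 0, hence a = 0
    have hb0' : (b : ℝ) = 0 := hb0.symm
    have hA0' : A = 0 := le_antisymm (hb0' ▸ hAB) hA0
    have hent_a : entTerm a = 0 := by
      simp [entTerm, ← hA, hA0']
    have hent_b : entTerm (b : ℝ≥0∞) = 0 := by
      simp [entTerm, ENNReal.coe_toReal, hb0']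
    rw [hent_a, hent_b, hA0', hb0']
    simp
  · have hSpos : 0 < Sr := lt_of_lt_of_le hbpos hbS
    have hL : Real.logb 2 (Sr / (b : ℝ)) = Real.logb 2 Sr - Real.logb 2 (b : ℝ) :=
      Real.logb_div hSpos.ne' hbpos.ne'
    have tang := aux_tangent hA0 hbpos
    have hreal : -(A * Real.logb 2 A) + ((b : ℝ) - A) * Real.logb 2 (Sr / (b : ℝ))
        ≤ -((b : ℝ) * Real.logb 2 (b : ℝ)) + ((b : ℝ) - A) * γ := by
      rw [hL, hγ]; nlinarith [tang]
    have hx1 : 0 ≤ -(A * Real.logb 2 A) := by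
      have hlA : Real.logb 2 A ≤ 0 :=
        Real.logb_nonpos one_lt_two hA0 (by linarith)
      nlinarith
    have hx2 : 0 ≤ ((b : ℝ) - A) * Real.logb 2 (Sr / (b : ℝ)) := by
      have h1 : (1 : ℝ) ≤ Sr / (b : ℝ) := (one_le_div hbpos).mpr hbS
      have := Real.logb_nonneg one_lt_two h1
      nlinarith
    have hent_a : entTerm a = ENNReal.ofReal (-(A * Real.logb 2 A)) := rfl
    have hent_b : entTerm (b : ℝ≥0∞)
        = ENNReal.ofReal (-((b : ℝ) * Real.logb 2 (b : ℝ))) := by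
      simp [entTerm, ENNReal.coe_toReal]
    calc entTerm a + ENNReal.ofReal (((b : ℝ) - A) * Real.logb 2 (Sr / (b : ℝ)))
        = ENNReal.ofReal (-(A * Real.logb 2 A)
            + ((b : ℝ) - A) * Real.logb 2 (Sr / (b : ℝ))) := by
          rw [hent_a, ENNReal.ofReal_add hx1 hx2]
      _ ≤ ENNReal.ofReal (-((b : ℝ) * Real.logb 2 (b : ℝ)) + ((b : ℝ) - A) * γ) :=
          ENNReal.ofReal_le_ofReal hreal
      _ ≤ entTerm (b : ℝ≥0∞) + ENNReal.ofReal (((b : ℝ) - A) * γ) := by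
          rw [hent_b]; exact ENNReal.ofReal_add_le


/-- Boundary-cell inequality in `ℝ≥0∞`. -/
lemma aux_boundary {Mr Sr γ : ℝ} (hM0 : 0 ≤ Mr) (hMS : Mr ≤ Sr)
    (hhalf : Sr < 1 - Sr) (hγ : γ = Real.logb 2 Sr + 1 / Real.log 2) :
    ENNReal.ofReal (-((1 - Mr) * Real.logb 2 (1 - Mr)))
        + ENNReal.ofReal (Sr - Mr) * ENNReal.ofReal γ
      ≤ ENNReal.ofReal (-((1 - Sr) * Real.logb 2 (1 - Sr))) := by
  have hS0 : 0 ≤ Sr := hM0.trans hMS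
  have hv : 0 < 1 - Sr := by linarith
  have hu0 : 0 ≤ 1 - Mr := by linarith
  have hL : 0 < Real.log 2 := Real.log_pos one_lt_two
  have tang := aux_tangent hu0 hv
  have hc : 0 ≤ Real.logb 2 (1 - Sr) + 1 / Real.log 2 := by
    have h1 : Real.logb 2 ((1:ℝ)/2) ≤ Real.logb 2 (1 - Sr) :=
      Real.logb_le_logb_of_le one_lt_two (by norm_num) (by linarith)
    have h2 : Real.logb 2 ((1:ℝ)/2) = -1 := by
      rw [one_div, Real.logb_inv, Real.logb_self_eq_one one_lt_two]
    have h3 : (1:ℝ) ≤ 1 / Real.log 2 := by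
      rw [le_div_iff₀ hL]
      have := Real.log_two_lt_d9
      linarith
    linarith
  rcases le_or_gt γ 0 with hγ0 | hγ0
  · rw [ENNReal.ofReal_of_nonpos hγ0, mul_zero, add_zero]
    apply ENNReal.ofReal_le_ofReal
    nlinarith [tang, mul_nonneg hc (sub_nonneg.mpr hMS)]
  · rw [← ENNReal.ofReal_mul (by linarith : (0:ℝ) ≤ Sr - Mr)]
    have hx1 : 0 ≤ -((1 - Mr) * Real.logb 2 (1 - Mr)) := by
      have hlog : Real.logb 2 (1 - Mr) ≤ 0 :=
        Real.logb_nonpos one_lt_two hu0 (by linarith)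
      nlinarith
    have hx2 : 0 ≤ (Sr - Mr) * γ := mul_nonneg (by linarith) hγ0.le
    rw [← ENNReal.ofReal_add hx1 hx2]
    apply ENNReal.ofReal_le_ofReal
    rcases eq_or_lt_of_le hS0 with hS0' | hSpos
    · have hMr0' : Mr = 0 := le_antisymm (by linarith) hM0
      rw [hMr0', ← hS0']
      norm_num
    · have hγc : γ ≤ Real.logb 2 (1 - Sr) + 1 / Real.log 2 := by
        rw [hγ]
        have := Real.logb_le_logb_of_le one_lt_two hSpos (by linarith : Sr ≤ 1 - Sr)
        linarith
      nlinarith [tang, mul_le_mul_of_nonneg_left hγc (by linarith : (0:ℝ) ≤ Sr - Mr)]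

/-- Key inequality behind the maximum-entropy property of the envelope
distribution: if `∑_x f(x) < ∞`, `H(μ̃_f) < ∞`, `k ≥ τ_f` and
`∑_{x ≥ k+1} f(x) < 1 − ∑_{x ≥ k+1} f(x)`, then for every `μ ∈ Λ_f`,
`H_{σ(π̃_k)}(μ̃_f) − H_{σ(π̃_k)}(μ) ≥ ∑_{x ≥ k+1}(f(x) − μ(x))·log₂((∑_{y ≥ k+1} f(y))/f(x))
  ≥ 0` (stated additively, with the middle sum a nonnegative extended real). -/
theorem envelope_key_inequality (f : ℕ → ℝ≥0) (hf : (∑' x, (f x : ℝ≥0∞)) ≠ ⊤)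
    (hH : Hent (mutilde f) ≠ ⊤)
    (k : ℕ) (hk : tauF f ≤ k)
    (hsmall : tailF f (k + 1) < 1 - tailF f (k + 1))
    (μ : ℕ → ℝ≥0∞) (hμ : μ ∈ envFam f) :
    Htail k μ
      + (∑' x : Tset (k + 1),
          ENNReal.ofReal (((f x.1 : ℝ) - (μ x.1).toReal)
            * Real.logb 2 ((∑' y : Tset (k + 1), (f y.1 : ℝ)) / (f x.1 : ℝ))))
      ≤ Htail k (mutilde f) := by
  obtain ⟨hμpmf, hμle⟩ := hμ
  set S := tailF f (k + 1) with hSdef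
  have hS1 : S < 1 := lt_of_lt_of_le hsmall tsub_le_self
  have hS_ne : S ≠ ⊤ := (hS1.trans ENNReal.one_lt_top).ne
  set Sr := S.toReal with hSr
  have hSr0 : 0 ≤ Sr := ENNReal.toReal_nonneg
  have hSrhalf : Sr < 1 - Sr := by
    have h1 : (1 : ℝ≥0∞) - S ≠ ⊤ := (lt_of_le_of_lt tsub_le_self ENNReal.one_lt_top).ne
    have h2 := (ENNReal.toReal_lt_toReal hS_ne h1).mpr hsmall
    rwa [ENNReal.toReal_sub_of_le hS1.le ENNReal.one_ne_top, ENNReal.toReal_one] at h2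
  set γ := Real.logb 2 Sr + 1 / Real.log 2 with hγ
  set M := measOf μ (Tset (k + 1)) with hM
  have hMS : M ≤ S := ENNReal.tsum_le_tsum fun x => hμle x.1
  have hM_ne : M ≠ ⊤ := (lt_of_le_of_lt hMS hS_ne.lt_top).ne
  set Mr := M.toReal with hMr
  have hMr0 : 0 ≤ Mr := ENNReal.toReal_nonneg
  have hMrS : Mr ≤ Sr := ENNReal.toReal_mono hS_ne hMS
  -- splitting ℕ into `Iic k` and its complement `Tset (k+1)`
  have hcompl : (Set.Iic k)ᶜ = Tset (k + 1) := by
    ext x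
    simp only [Set.mem_compl_iff, Set.mem_Iic, Tset, Set.mem_setOf_eq]
    omega
  have hsplit : ∀ p : ℕ → ℝ≥0∞,
      measOf p (Set.Iic k) + measOf p (Tset (k + 1)) = ∑' x, p x := by
    intro p
    have h := Summable.tsum_add_tsum_compl (s := Set.Iic k) (f := p)
      ENNReal.summable ENNReal.summable
    rw [hcompl] at h
    exact h
  have hPμ : measOf μ (Set.Iic k) = 1 - M :=
    ENNReal.eq_sub_of_add_eq hM_ne ((hsplit μ).trans hμpmf)
  -- facts about τ_f
  have hne : {j | 1 ≤ j ∧ tailF f j ≤ 1}.Nonempty := ⟨k + 1, by omega, hS1.le⟩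
  obtain ⟨hτ1, hτle⟩ : 1 ≤ tauF f ∧ tailF f (tauF f) ≤ 1 := Nat.sInf_mem hne
  have hmut_tail : ∀ x : ℕ, k + 1 ≤ x → mutilde f x = (f x : ℝ≥0∞) := by
    intro x hx
    have hx' : tauF f ≤ x := by omega
    simp [mutilde, hx']
  have hmut_pmf : ∑' x, mutilde f x = 1 := by
    have hcompl2 : (Set.Iio (tauF f))ᶜ = Tset (tauF f) := by
      ext x
      simp only [Set.mem_compl_iff, Set.mem_Iio, Tset, Set.mem_setOf_eq]
      omega
    have h1 : (∑' x : (Set.Iio (tauF f) : Set ℕ), mutilde f x.1)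
        = 1 - tailF f (tauF f) := by
      have hmem : (tauF f - 1) ∈ Set.Iio (tauF f) := by
        simp only [Set.mem_Iio]; omega
      rw [tsum_eq_single (⟨tauF f - 1, hmem⟩ : (Set.Iio (tauF f) : Set ℕ)) ?_]
      · have hnotle : ¬ (tauF f ≤ tauF f - 1) := by omega
        simp [mutilde, hnotle]
      · rintro ⟨x, hx⟩ hne'
        have hx' : x < tauF f := hx
        have hxne : x ≠ tauF f - 1 := by
          intro h
          exact hne' (Subtype.ext h)
        have hnotle : ¬ (tauF f ≤ x) := by omega
        simp [mutilde, hnotle, hxne]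
    have h2 : (∑' x : (Tset (tauF f) : Set ℕ), mutilde f x.1)
        = tailF f (tauF f) :=
      tsum_congr fun x => by simp [mutilde, show tauF f ≤ x.1 from x.2]
    have h := Summable.tsum_add_tsum_compl (s := Set.Iio (tauF f)) (f := mutilde f)
      ENNReal.summable ENNReal.summable
    rw [hcompl2, h1, h2] at h
    rw [← h]
    exact tsub_add_cancel_of_le hτle
  have hmutT : measOf (mutilde f) (Tset (k + 1)) = S :=
    tsum_congr fun x => hmut_tail x.1 x.2
  have hPmut : measOf (mutilde f) (Set.Iic k) = 1 - S := by
    apply ENNReal.eq_sub_of_add_eq hS_ne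
    rw [← hmutT, hsplit (mutilde f)]
    exact hmut_pmf
  -- real-valued tail sums
  have hSrsum : (∑' y : Tset (k + 1), (f y.1 : ℝ)) = Sr := by
    rw [hSr, hSdef]
    unfold tailF
    rw [ENNReal.tsum_toReal_eq (fun a => ENNReal.coe_ne_top)]
    simp
  have hμ_ne : ∀ x : ℕ, μ x ≠ ⊤ :=
    fun x => (lt_of_le_of_lt (hμle x) ENNReal.coe_lt_top).ne
  have hMrsum : (∑' x : Tset (k + 1), (μ x.1).toReal) = Mr := by
    rw [hMr, hM]
    exact (ENNReal.tsum_toReal_eq (fun a : (Tset (k + 1) : Set ℕ) => hμ_ne a.1)).symm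
  have hsumf : Summable (fun y : Tset (k + 1) => (f y.1 : ℝ)) := by
    refine NNReal.summable_coe.mpr (ENNReal.tsum_coe_ne_top_iff_summable.mp ?_)
    exact hS_ne
  have hμler : ∀ x : Tset (k + 1), (μ x.1).toReal ≤ (f x.1 : ℝ) := fun x => by
    have := ENNReal.toReal_mono ENNReal.coe_ne_top (hμle x.1)
    simpa using this
  have hsumμ : Summable (fun x : Tset (k + 1) => (μ x.1).toReal) :=
    Summable.of_nonneg_of_le (fun x => ENNReal.toReal_nonneg) hμler hsumf
  have hd0 : ∀ x : Tset (k + 1), 0 ≤ (f x.1 : ℝ) - (μ x.1).toReal :=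
    fun x => sub_nonneg.mpr (hμler x)
  -- the γ-sum
  have hDsum : (∑' x : Tset (k + 1),
        ENNReal.ofReal (((f x.1 : ℝ) - (μ x.1).toReal) * γ))
      = ENNReal.ofReal (Sr - Mr) * ENNReal.ofReal γ := by
    calc (∑' x : Tset (k + 1), ENNReal.ofReal (((f x.1 : ℝ) - (μ x.1).toReal) * γ))
        = ∑' x : Tset (k + 1),
            ENNReal.ofReal ((f x.1 : ℝ) - (μ x.1).toReal) * ENNReal.ofReal γ :=
          tsum_congr fun x => ENNReal.ofReal_mul (hd0 x)
      _ = (∑' x : Tset (k + 1),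
            ENNReal.ofReal ((f x.1 : ℝ) - (μ x.1).toReal)) * ENNReal.ofReal γ :=
          ENNReal.tsum_mul_right
      _ = ENNReal.ofReal (∑' x : Tset (k + 1),
            ((f x.1 : ℝ) - (μ x.1).toReal)) * ENNReal.ofReal γ := by
          rw [← ENNReal.ofReal_tsum_of_nonneg hd0 (hsumf.sub hsumμ)]
      _ = ENNReal.ofReal (Sr - Mr) * ENNReal.ofReal γ := by
          rw [Summable.tsum_sub hsumf hsumμ, hSrsum, hMrsum]
  -- per-term inequality
  have hSr1 : Sr < 1 := by linarith
  have hterm : ∀ x : Tset (k + 1),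
      entTerm (μ x.1) + ENNReal.ofReal (((f x.1 : ℝ) - (μ x.1).toReal)
          * Real.logb 2 (Sr / (f x.1 : ℝ)))
      ≤ entTerm ((f x.1 : ℝ≥0∞))
          + ENNReal.ofReal (((f x.1 : ℝ) - (μ x.1).toReal) * γ) := by
    intro x
    have hbS : ((f x.1 : ℝ≥0) : ℝ) ≤ Sr := by
      have h1 : ((f x.1 : ℝ≥0) : ℝ≥0∞) ≤ S := by
        rw [hSdef]
        exact ENNReal.le_tsum x
      have := ENNReal.toReal_mono hS_ne h1
      simpa using this
    exact aux_perterm (μ x.1) (f x.1) (hμle x.1) hbS hSr1 hγ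
  -- boundary inequality
  have hM1 : M ≤ 1 := hMS.trans hS1.le
  have h1M : entTerm (1 - M)
      = ENNReal.ofReal (-((1 - Mr) * Real.logb 2 (1 - Mr))) := by
    unfold entTerm
    rw [ENNReal.toReal_sub_of_le hM1 ENNReal.one_ne_top, ENNReal.toReal_one, hMr]
  have h1S : entTerm (1 - S)
      = ENNReal.ofReal (-((1 - Sr) * Real.logb 2 (1 - Sr))) := by
    unfold entTerm
    rw [ENNReal.toReal_sub_of_le hS1.le ENNReal.one_ne_top, ENNReal.toReal_one, hSr]
  have hbound : entTerm (1 - M) + ENNReal.ofReal (Sr - Mr) * ENNReal.ofReal γ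
      ≤ entTerm (1 - S) := by
    rw [h1M, h1S]
    exact aux_boundary hMr0 hMrS hSrhalf hγ
  -- assemble
  have htailmut : (∑' x : Tset (k + 1), entTerm (mutilde f x.1))
      = ∑' x : Tset (k + 1), entTerm ((f x.1 : ℝ≥0∞)) :=
    tsum_congr fun x => by rw [hmut_tail x.1 x.2]
  unfold Htail
  rw [hPμ, hPmut, htailmut]
  simp only [hSrsum]
  calc entTerm (1 - M) + (∑' x : Tset (k + 1), entTerm (μ x.1))
        + (∑' x : Tset (k + 1),
            ENNReal.ofReal (((f x.1 : ℝ) - (μ x.1).toReal)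
              * Real.logb 2 (Sr / (f x.1 : ℝ))))
      = entTerm (1 - M) + ∑' x : Tset (k + 1),
          (entTerm (μ x.1) + ENNReal.ofReal (((f x.1 : ℝ) - (μ x.1).toReal)
            * Real.logb 2 (Sr / (f x.1 : ℝ)))) := by
        rw [ENNReal.tsum_add, add_assoc]
    _ ≤ entTerm (1 - M) + ∑' x : Tset (k + 1),
          (entTerm ((f x.1 : ℝ≥0∞))
            + ENNReal.ofReal (((f x.1 : ℝ) - (μ x.1).toReal) * γ)) :=
        add_le_add_right (ENNReal.tsum_le_tsum hterm) _
    _ = (∑' x : Tset (k + 1), entTerm ((f x.1 : ℝ≥0∞)))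
          + (entTerm (1 - M) + ENNReal.ofReal (Sr - Mr) * ENNReal.ofReal γ) := by
        rw [ENNReal.tsum_add, hDsum]
        ring
    _ ≤ (∑' x : Tset (k + 1), entTerm ((f x.1 : ℝ≥0∞))) + entTerm (1 - S) :=
        add_le_add_right hbound _
    _ = entTerm (1 - S) + ∑' x : Tset (k + 1), entTerm ((f x.1 : ℝ≥0∞)) :=
        add_comm _ _
end
end

section
/- (Polynomial envelopes satisfy the tail regularity condition.) Let p > 1 and f_p(i) = i^{−p} for i ∈ X = {1,2,3,...} (f_p is summable, so the envelope distribution μ̃_{f_p} is well defined). Then limsup_{k→∞} ( ∑_{i ≥ k} f_p(i)·log₂(1/f_p(i)) ) / ( μ̃_{f_p}(T_k)·log₂(1/μ̃_{f_p}(T_k)) ) < ∞. -/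
open Filter Topology
open scoped ENNReal NNReal BigOperators

noncomputable section

private lemma mvt_bounds {q : ℝ} (hq : 1 < q) {a : ℝ} (ha : 1 ≤ a) :
    (q - 1) * (a + 1) ^ (-q) ≤ a ^ (1 - q) - (a + 1) ^ (1 - q) ∧
      a ^ (1 - q) - (a + 1) ^ (1 - q) ≤ (q - 1) * a ^ (-q) := by
  have ha0 : (0:ℝ) < a := lt_of_lt_of_le one_pos ha
  obtain ⟨c, hc, hder⟩ := exists_hasDerivAt_eq_slope (fun x => x ^ (1 - q))
      (fun x => (1 - q) * x ^ (-q)) (by linarith : a < a + 1)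
      (by
        apply ContinuousOn.rpow_const continuousOn_id
        intro x hx
        exact Or.inl (by nlinarith [hx.1] : x ≠ 0))
      (by
        intro x hx
        have hx0 : x ≠ 0 := by nlinarith [hx.1]
        have := Real.hasDerivAt_rpow_const (x := x) (p := 1 - q) (Or.inl hx0)
        simpa [show (1:ℝ) - q - 1 = -q by ring] using this)
  have hc1 : 0 < c := by nlinarith [hc.1]
  have heq : a ^ (1 - q) - (a + 1) ^ (1 - q) = (q - 1) * c ^ (-q) := by
    have : (1 - q) * c ^ (-q) = (a + 1) ^ (1 - q) - a ^ (1 - q) := by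
      rw [hder]; ring_nf
    nlinarith [this]
  have h1 : (a + 1) ^ (-q) ≤ c ^ (-q) :=
    Real.rpow_le_rpow_of_nonpos hc1 (le_of_lt hc.2) (by linarith)
  have h2 : c ^ (-q) ≤ a ^ (-q) :=
    Real.rpow_le_rpow_of_nonpos ha0 (le_of_lt hc.1) (by linarith)
  constructor
  · rw [heq]; nlinarith
  · rw [heq]; nlinarith

private lemma tele_hasSum {q : ℝ} (hq : 1 < q) {k : ℕ} (hk : 1 ≤ k) :
    HasSum (fun i : ℕ => ((k + i : ℕ) : ℝ) ^ (1 - q) - ((k + i + 1 : ℕ) : ℝ) ^ (1 - q))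
      ((k : ℝ) ^ (1 - q)) := by
  set g : ℕ → ℝ := fun i => ((k + i : ℕ) : ℝ) ^ (1 - q) with hg
  have hgi : ∀ i : ℕ, g i = ((k : ℝ) + i) ^ (1 - q) := by
    intro i; simp [hg]
  have hb : ∀ i : ℕ, (1:ℝ) ≤ (k:ℝ) + i := by
    intro i
    have h1 : (1:ℝ) ≤ (k:ℝ) := by exact_mod_cast hk
    have h2 : (0:ℝ) ≤ (i:ℝ) := Nat.cast_nonneg i
    linarith
  have hnn : ∀ i : ℕ, 0 ≤ g i - g (i + 1) := by
    intro i
    have h1 : ((k:ℝ) + i + 1) ^ (1 - q) ≤ ((k:ℝ) + i) ^ (1 - q) :=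
      Real.rpow_le_rpow_of_nonpos (by linarith [hb i]) (by linarith) (by linarith)
    rw [show ((k:ℝ) + ((i:ℕ):ℝ) + 1) = (k:ℝ) + (((i+1:ℕ)):ℝ) by push_cast; ring] at h1
    rw [hgi i, hgi (i + 1)]
    linarith
  have key : HasSum (fun i => g i - g (i + 1)) ((k : ℝ) ^ (1 - q)) := by
    rw [hasSum_iff_tendsto_nat_of_nonneg hnn]
    have hsum : ∀ n : ℕ, ∑ i ∈ Finset.range n, (g i - g (i + 1)) = g 0 - g n :=
      fun n => Finset.sum_range_sub' g n
    simp only [hsum]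
    have hg0 : g 0 = (k : ℝ) ^ (1 - q) := by simp [hg]
    have hlim : Tendsto g atTop (𝓝 0) := by
      have h1 : Tendsto (fun i : ℕ => ((k + i : ℕ) : ℝ)) atTop atTop := by
        apply tendsto_natCast_atTop_atTop.comp
        have := tendsto_add_atTop_nat k
        exact this.congr fun n => by omega
      have h2 := (tendsto_rpow_neg_atTop (by linarith : (0:ℝ) < q - 1)).comp h1
      simpa [hg, Function.comp_def, show -(q-1) = 1 - q by ring] using h2
    rw [hg0]
    simpa using (tendsto_const_nhds (x := (k:ℝ) ^ (1 - q))).sub hlim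
  exact key.congr_fun fun i => by rw [hgi i, hgi (i+1)]; push_cast; ring_nf

private lemma summable_shift {q : ℝ} (hq : 1 < q) (k : ℕ) :
    Summable (fun i : ℕ => ((k + i : ℕ) : ℝ) ^ (-q)) := by
  have h : Summable (fun n : ℕ => (n : ℝ) ^ (-q)) :=
    Real.summable_nat_rpow.2 (by linarith : -q < -1)
  exact ((summable_nat_add_iff k).2 h).congr fun i => by rw [Nat.add_comm]

/-- Real tail sum `∑_{i ≥ k} i^{-q}`. -/
private def tailS (q : ℝ) (k : ℕ) : ℝ := ∑' i : ℕ, ((k + i : ℕ) : ℝ) ^ (-q)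

private lemma one_le_cast_add (k i : ℕ) (hk : 1 ≤ k) : (1:ℝ) ≤ ((k + i : ℕ) : ℝ) := by
  have : 1 ≤ k + i := le_trans hk (Nat.le_add_right k i)
  exact_mod_cast this

private lemma tailS_lower {q : ℝ} (hq : 1 < q) {k : ℕ} (hk : 1 ≤ k) :
    (q - 1)⁻¹ * (k : ℝ) ^ (1 - q) ≤ tailS q k := by
  have hq1 : (0:ℝ) < q - 1 := by linarith
  have hts := (tele_hasSum hq hk).tsum_eq
  have hle : ∀ i : ℕ, ((k+i:ℕ):ℝ) ^ (1-q) - ((k+i+1:ℕ):ℝ) ^ (1-q)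
      ≤ (q - 1) * ((k+i:ℕ):ℝ) ^ (-q) := by
    intro i
    have h := (mvt_bounds hq (one_le_cast_add k i hk)).2
    rwa [show ((k+i:ℕ):ℝ) + 1 = ((k+i+1:ℕ):ℝ) by push_cast; ring] at h
  have hmain := Summable.tsum_le_tsum hle (tele_hasSum hq hk).summable
    ((summable_shift hq k).mul_left (q - 1))
  rw [hts, tsum_mul_left] at hmain
  have h2 := mul_le_mul_of_nonneg_left hmain (le_of_lt (inv_pos.mpr hq1))
  rwa [← mul_assoc, inv_mul_cancel₀ (ne_of_gt hq1), one_mul] at h2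

private lemma tailS_upper {q : ℝ} (hq : 1 < q) {k : ℕ} (hk : 1 ≤ k) :
    tailS q k ≤ (1 + (q - 1)⁻¹) * (k : ℝ) ^ (1 - q) := by
  have hq1 : (0:ℝ) < q - 1 := by linarith
  have hsum := summable_shift hq k
  have hts := (tele_hasSum hq hk).tsum_eq
  have hsum1 : Summable (fun i : ℕ => ((k + i + 1 : ℕ) : ℝ) ^ (-q)) :=
    ((summable_nat_add_iff (f := fun i : ℕ => ((k + i : ℕ) : ℝ) ^ (-q)) 1).2 hsum).congr
      fun i => rfl
  have hle : ∀ i : ℕ, ((k+i+1:ℕ):ℝ) ^ (-q)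
      ≤ (q - 1)⁻¹ * (((k+i:ℕ):ℝ) ^ (1-q) - ((k+i+1:ℕ):ℝ) ^ (1-q)) := by
    intro i
    have h := (mvt_bounds hq (one_le_cast_add k i hk)).1
    rw [show ((k+i:ℕ):ℝ) + 1 = ((k+i+1:ℕ):ℝ) by push_cast; ring] at h
    have h2 := mul_le_mul_of_nonneg_left h (le_of_lt (inv_pos.mpr hq1))
    rwa [← mul_assoc, inv_mul_cancel₀ (ne_of_gt hq1), one_mul] at h2
  have h1 := Summable.tsum_le_tsum hle hsum1 ((tele_hasSum hq hk).summable.mul_left (q - 1)⁻¹)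
  rw [tsum_mul_left, hts] at h1
  have hsplit : tailS q k
      = ((k + 0 : ℕ) : ℝ) ^ (-q) + ∑' i : ℕ, ((k + (i + 1) : ℕ) : ℝ) ^ (-q) :=
    Summable.tsum_eq_zero_add hsum
  have hre : ∑' i : ℕ, ((k + (i + 1) : ℕ) : ℝ) ^ (-q)
      = ∑' i : ℕ, ((k + i + 1 : ℕ) : ℝ) ^ (-q) := tsum_congr fun i => rfl
  have h0 : ((k + 0 : ℕ) : ℝ) ^ (-q) ≤ (k : ℝ) ^ (1 - q) := by
    rw [Nat.add_zero]
    exact Real.rpow_le_rpow_of_exponent_le (by exact_mod_cast hk) (by linarith)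
  rw [hsplit, hre]
  linarith [h0, h1]

private lemma tailS_pos {q : ℝ} (hq : 1 < q) {k : ℕ} (hk : 1 ≤ k) : 0 < tailS q k := by
  have := tailS_lower hq hk
  have hk0 : (0:ℝ) < (k:ℝ) := by exact_mod_cast hk
  have : (0:ℝ) < (q - 1)⁻¹ * (k : ℝ) ^ (1 - q) :=
    mul_pos (inv_pos.mpr (by linarith)) (Real.rpow_pos_of_pos hk0 _)
  linarith [tailS_lower hq hk]

private def tsetEquiv (k : ℕ) : ℕ ≃ Tset k where
  toFun i := ⟨k + i, Nat.le_add_right k i⟩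
  invFun x := x.1 - k
  left_inv i := by simp
  right_inv x := Subtype.ext (Nat.add_sub_cancel' x.2)

private lemma tsum_Tset {M : Type*} [AddCommMonoid M] [TopologicalSpace M] (f : ℕ → M) (k : ℕ) :
    ∑' x : Tset k, f x.1 = ∑' i : ℕ, f (k + i) :=
  ((tsetEquiv k).tsum_eq (fun x : Tset k => f x.1)).symm

private lemma entTerm_ofReal {s : ℝ} (hs : 0 ≤ s) :
    entTerm (ENNReal.ofReal s) = ENNReal.ofReal (s * (-Real.log s) / Real.log 2) := by
  rw [entTerm, ENNReal.toReal_ofReal hs, Real.logb]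
  congr 1; ring

private lemma entTerm_rpow {p : ℝ} {i : ℕ} (hi : 1 ≤ i) :
    entTerm ((((i : ℝ≥0) ^ (-p) : ℝ≥0)) : ℝ≥0∞)
      = ENNReal.ofReal ((i:ℝ) ^ (-p) * (p * Real.log i) / Real.log 2) := by
  have hi0 : (0:ℝ) < (i:ℝ) := by exact_mod_cast hi
  have ht : ((((i : ℝ≥0) ^ (-p) : ℝ≥0)) : ℝ≥0∞).toReal = (i:ℝ) ^ (-p) := by
    rw [ENNReal.coe_toReal, NNReal.coe_rpow, NNReal.coe_natCast]
  rw [entTerm, ht, Real.logb, Real.log_rpow hi0]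
  congr 1; ring

private lemma coe_nnrpow_eq (p : ℝ) (n : ℕ) (hn : 1 ≤ n) :
    (((n : ℝ≥0) ^ (-p) : ℝ≥0) : ℝ≥0∞) = ENNReal.ofReal ((n:ℝ) ^ (-p)) := by
  have h0 : (0:ℝ) < (n:ℝ) := by exact_mod_cast hn
  rw [ENNReal.ofReal, Real.toNNReal_rpow_of_nonneg (le_of_lt h0)]
  congr 2
  exact (Real.toNNReal_natCast n).symm

private lemma measOf_mutilde {p : ℝ} (hp : 1 < p) {k : ℕ}
    (hk : tauF (fun i : ℕ => (i : ℝ≥0) ^ (-p)) ≤ k) (hk1 : 1 ≤ k) :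
    measOf (mutilde (fun i : ℕ => (i : ℝ≥0) ^ (-p))) (Tset k) = ENNReal.ofReal (tailS p k) := by
  rw [measOf]
  have h1 : ∀ x : Tset k, mutilde (fun i : ℕ => (i : ℝ≥0) ^ (-p)) x.1
      = ENNReal.ofReal ((x.1 : ℝ) ^ (-p)) := by
    intro x
    rw [mutilde, if_pos (le_trans hk x.2)]
    exact coe_nnrpow_eq p x.1 (le_trans hk1 x.2)
  rw [tsum_congr h1, tsum_Tset (fun n : ℕ => ENNReal.ofReal ((n : ℝ) ^ (-p))) k,
    ← ENNReal.ofReal_tsum_of_nonneg (fun i => Real.rpow_nonneg (Nat.cast_nonneg _) _)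
      (summable_shift hp k)]
  rfl

private lemma log_nonneg_cast {n : ℕ} (hn : 1 ≤ n) : 0 ≤ Real.log n :=
  Real.log_nonneg (by exact_mod_cast hn)

/-- The real numerator term. -/
private def numF (p : ℝ) (n : ℕ) : ℝ := (n:ℝ) ^ (-p) * (p * Real.log n) / Real.log 2

private lemma numF_nonneg {p : ℝ} (hp : 1 < p) {n : ℕ} : 0 ≤ numF p n := by
  rcases Nat.eq_zero_or_pos n with h | h
  · simp [numF, h]
  · apply div_nonneg _ (le_of_lt (Real.log_pos one_lt_two))
    exact mul_nonneg (Real.rpow_nonneg (Nat.cast_nonneg _) _)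
      (mul_nonneg (by linarith) (log_nonneg_cast h))

private lemma numF_le {p : ℝ} (hp : 1 < p) {k i : ℕ} (hk : 1 ≤ k) :
    numF p (k + i) ≤ (p / Real.log 2) *
      (Real.log k * ((k+i:ℕ):ℝ) ^ (-p)
        + (((p-1)/2)⁻¹ * (k:ℝ) ^ (-((p-1)/2))) * ((k+i:ℕ):ℝ) ^ (-((p+1)/2))) := by
  set ε : ℝ := (p-1)/2 with hε
  have hε0 : 0 < ε := by rw [hε]; linarith
  have hL : 0 < Real.log 2 := Real.log_pos one_lt_two
  have hk0 : (0:ℝ) < (k:ℝ) := by exact_mod_cast hk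
  have ha1 : (1:ℝ) ≤ ((k+i:ℕ):ℝ) := one_le_cast_add k i hk
  have ha0 : (0:ℝ) < ((k+i:ℕ):ℝ) := by linarith
  have hka : (k:ℝ) ≤ ((k+i:ℕ):ℝ) := by push_cast; linarith [Nat.cast_nonneg (α := ℝ) i]
  -- log (k+i) ≤ log k + (k+i)^ε * k^(-ε) / ε
  have hlog : Real.log ((k+i:ℕ):ℝ) ≤ Real.log k + ((k+i:ℕ):ℝ) ^ ε * (k:ℝ) ^ (-ε) / ε := by
    have h1 : Real.log ((k+i:ℕ):ℝ) - Real.log k = Real.log (((k+i:ℕ):ℝ) / (k:ℝ)) :=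
      (Real.log_div (by linarith) (by linarith)).symm
    have h2 : Real.log (((k+i:ℕ):ℝ) / (k:ℝ)) ≤ (((k+i:ℕ):ℝ) / (k:ℝ)) ^ ε / ε :=
      Real.log_le_rpow_div (by positivity) hε0
    have h3 : (((k+i:ℕ):ℝ) / (k:ℝ)) ^ ε = ((k+i:ℕ):ℝ) ^ ε * (k:ℝ) ^ (-ε) := by
      rw [Real.div_rpow (by linarith) (le_of_lt hk0), Real.rpow_neg (le_of_lt hk0),
        div_eq_mul_inv]
    rw [h3] at h2
    linarith
  have hmul : ((k+i:ℕ):ℝ) ^ (-p) * (((k+i:ℕ):ℝ) ^ ε) = ((k+i:ℕ):ℝ) ^ (-((p+1)/2)) := by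
    rw [← Real.rpow_add ha0]
    congr 1
    rw [hε]; ring
  have hrnn : (0:ℝ) ≤ ((k+i:ℕ):ℝ) ^ (-p) := Real.rpow_nonneg (le_of_lt ha0) _
  have hknn : (0:ℝ) ≤ (k:ℝ) ^ (-ε) := Real.rpow_nonneg (le_of_lt hk0) _
  rw [numF]
  have key : ((k+i:ℕ):ℝ) ^ (-p) * Real.log ((k+i:ℕ):ℝ)
      ≤ Real.log k * ((k+i:ℕ):ℝ) ^ (-p)
        + (ε⁻¹ * (k:ℝ) ^ (-ε)) * ((k+i:ℕ):ℝ) ^ (-((p+1)/2)) := by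
    have h4 := mul_le_mul_of_nonneg_left hlog hrnn
    calc ((k+i:ℕ):ℝ) ^ (-p) * Real.log ((k+i:ℕ):ℝ)
        ≤ ((k+i:ℕ):ℝ) ^ (-p) * (Real.log k + ((k+i:ℕ):ℝ) ^ ε * (k:ℝ) ^ (-ε) / ε) := h4
      _ = Real.log k * ((k+i:ℕ):ℝ) ^ (-p)
          + (ε⁻¹ * (k:ℝ) ^ (-ε)) * (((k+i:ℕ):ℝ) ^ (-p) * ((k+i:ℕ):ℝ) ^ ε) := by ring
      _ = _ := by rw [hmul]
  calc (k+i:ℕ) ^ (-p) * (p * Real.log (k+i:ℕ)) / Real.log 2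
      = (p / Real.log 2) * (((k+i:ℕ):ℝ) ^ (-p) * Real.log (k+i:ℕ)) := by ring
    _ ≤ (p / Real.log 2) * (Real.log k * ((k+i:ℕ):ℝ) ^ (-p)
          + (ε⁻¹ * (k:ℝ) ^ (-ε)) * ((k+i:ℕ):ℝ) ^ (-((p+1)/2))) := by
        apply mul_le_mul_of_nonneg_left key (by positivity)


private lemma numF_le_simple {p : ℝ} (hp : 1 < p) {n : ℕ} (hn : 1 ≤ n) :
    numF p n ≤ (p / (((p-1)/2) * Real.log 2)) * (n:ℝ) ^ (-((p+1)/2)) := by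
  set ε : ℝ := (p-1)/2 with hε
  have hε0 : 0 < ε := by rw [hε]; linarith
  have hL : 0 < Real.log 2 := Real.log_pos one_lt_two
  have hn0 : (0:ℝ) < (n:ℝ) := by exact_mod_cast hn
  have h1 : Real.log n ≤ (n:ℝ) ^ ε / ε := Real.log_le_rpow_div (le_of_lt hn0) hε0
  have hmul : (n:ℝ) ^ (-p) * ((n:ℝ) ^ ε) = (n:ℝ) ^ (-((p+1)/2)) := by
    rw [← Real.rpow_add hn0]; congr 1; rw [hε]; ring
  have hnn : (0:ℝ) ≤ (n:ℝ) ^ (-p) * p / Real.log 2 := by positivity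
  calc numF p n = ((n:ℝ) ^ (-p) * p / Real.log 2) * Real.log n := by rw [numF]; ring
    _ ≤ ((n:ℝ) ^ (-p) * p / Real.log 2) * ((n:ℝ) ^ ε / ε) :=
        mul_le_mul_of_nonneg_left h1 hnn
    _ = (p / (ε * Real.log 2)) * ((n:ℝ) ^ (-p) * ((n:ℝ) ^ ε)) := by
        field_simp
    _ = _ := by rw [hmul]

private lemma num_summable {p : ℝ} (hp : 1 < p) {k : ℕ} (hk : 1 ≤ k) :
    Summable (fun i : ℕ => numF p (k + i)) := by
  have hq2 : (1:ℝ) < (p+1)/2 := by linarith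
  apply Summable.of_nonneg_of_le (fun i => numF_nonneg hp)
    (fun i => numF_le_simple hp (le_trans hk (Nat.le_add_right k i)))
  exact (summable_shift hq2 k).mul_left _

private lemma num_sum_eq {p : ℝ} (hp : 1 < p) {k : ℕ} (hk : 1 ≤ k) :
    (∑' i : Tset k, entTerm ((((i.1 : ℝ≥0) ^ (-p) : ℝ≥0)) : ℝ≥0∞))
      = ENNReal.ofReal (∑' i : ℕ, numF p (k + i)) := by
  rw [tsum_Tset (fun n : ℕ => entTerm ((((n : ℝ≥0) ^ (-p) : ℝ≥0)) : ℝ≥0∞)) k]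
  have h1 : ∀ i : ℕ, entTerm ((((k + i : ℕ) : ℝ≥0) ^ (-p) : ℝ≥0) : ℝ≥0∞)
      = ENNReal.ofReal (numF p (k + i)) := fun i =>
    entTerm_rpow (le_trans hk (Nat.le_add_right k i))
  rw [tsum_congr h1,
    ← ENNReal.ofReal_tsum_of_nonneg (fun i => numF_nonneg hp) (num_summable hp hk)]

private lemma num_tsum_le {p : ℝ} (hp : 1 < p) {k : ℕ} (hk : 1 ≤ k)
    (hlog : ((p-1)/2)⁻¹ * (1 + ((p+1)/2 - 1)⁻¹) ≤ Real.log k) :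
    ∑' i : ℕ, numF p (k + i)
      ≤ (p / Real.log 2) * ((1 + (p-1)⁻¹) + 1) * ((k:ℝ) ^ (1-p) * Real.log k) := by
  set ε : ℝ := (p-1)/2 with hε
  set q2 : ℝ := (p+1)/2 with hq2d
  have hε0 : 0 < ε := by rw [hε]; linarith
  have hq2 : 1 < q2 := by rw [hq2d]; linarith
  have hL : 0 < Real.log 2 := Real.log_pos one_lt_two
  have hk0 : (0:ℝ) < (k:ℝ) := by exact_mod_cast hk
  have hlognn : 0 ≤ Real.log k := by
    have i1 : 0 < ε⁻¹ := inv_pos.mpr hε0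
    have i2 : 0 < (q2 - 1)⁻¹ := inv_pos.mpr (by linarith)
    nlinarith
  have hsum_p := summable_shift hp k
  have hsum_q := summable_shift hq2 k
  set C : ℝ := ε⁻¹ * (k:ℝ) ^ (-ε) with hC
  have hCnn : 0 ≤ C := by rw [hC]; positivity
  have hbound := Summable.tsum_le_tsum (fun i => numF_le hp hk (i := i))
    (num_summable hp hk)
    ((((hsum_p.mul_left (Real.log k)).add (hsum_q.mul_left C)).mul_left (p / Real.log 2)))
  rw [tsum_mul_left, Summable.tsum_add (hsum_p.mul_left (Real.log k)) (hsum_q.mul_left C),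
    tsum_mul_left, tsum_mul_left] at hbound
  have hb2 : ∑' i : ℕ, numF p (k+i)
      ≤ (p / Real.log 2) * (Real.log k * tailS p k + C * tailS q2 k) := hbound
  have t1 : tailS p k ≤ (1 + (p-1)⁻¹) * (k:ℝ) ^ (1-p) := tailS_upper hp hk
  have t2 : tailS q2 k ≤ (1 + (q2-1)⁻¹) * (k:ℝ) ^ (1-q2) := tailS_upper hq2 hk
  have hX : 0 < (k:ℝ) ^ (1-p) := Real.rpow_pos_of_pos hk0 _
  have hXq : 0 < (k:ℝ) ^ (1-q2) := Real.rpow_pos_of_pos hk0 _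
  have hXe : 0 < (k:ℝ) ^ (-ε) := Real.rpow_pos_of_pos hk0 _
  have hmulk : (k:ℝ) ^ (-ε) * (k:ℝ) ^ (1-q2) = (k:ℝ) ^ (1-p) := by
    rw [← Real.rpow_add hk0]; congr 1; rw [hε, hq2d]; ring
  have b1 : Real.log k * tailS p k ≤ Real.log k * ((1 + (p-1)⁻¹) * (k:ℝ) ^ (1-p)) :=
    mul_le_mul_of_nonneg_left t1 hlognn
  have b2 : C * tailS q2 k ≤ Real.log k * (k:ℝ) ^ (1-p) := by
    have s1 : C * tailS q2 k ≤ C * ((1 + (q2-1)⁻¹) * (k:ℝ) ^ (1-q2)) :=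
      mul_le_mul_of_nonneg_left t2 hCnn
    have s2 : C * ((1 + (q2-1)⁻¹) * (k:ℝ) ^ (1-q2))
        = (ε⁻¹ * (1 + (q2-1)⁻¹)) * ((k:ℝ) ^ (-ε) * (k:ℝ) ^ (1-q2)) := by rw [hC]; ring
    rw [s2, hmulk] at s1
    have s3 : (ε⁻¹ * (1 + (q2-1)⁻¹)) * (k:ℝ) ^ (1-p) ≤ Real.log k * (k:ℝ) ^ (1-p) :=
      mul_le_mul_of_nonneg_right hlog (le_of_lt hX)
    linarith
  have hinner : Real.log k * tailS p k + C * tailS q2 k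
      ≤ ((1 + (p-1)⁻¹) + 1) * ((k:ℝ) ^ (1-p) * Real.log k) := by nlinarith [b1, b2]
  calc ∑' i : ℕ, numF p (k+i)
      ≤ (p / Real.log 2) * (Real.log k * tailS p k + C * tailS q2 k) := hb2
    _ ≤ (p / Real.log 2) * (((1 + (p-1)⁻¹) + 1) * ((k:ℝ) ^ (1-p) * Real.log k)) :=
        mul_le_mul_of_nonneg_left hinner (by positivity)
    _ = _ := by ring

private lemma denom_bound {p : ℝ} (hp : 1 < p) {k : ℕ} (hk : 1 ≤ k)
    (hlog : 2 * (p-1)⁻¹ * Real.log (1 + (p-1)⁻¹) ≤ Real.log k)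
    (hlog1 : 1 ≤ Real.log k) :
    ENNReal.ofReal ((2 * Real.log 2)⁻¹ * ((k:ℝ) ^ (1-p) * Real.log k))
      ≤ entTerm (ENNReal.ofReal (tailS p k)) := by
  have hL : 0 < Real.log 2 := Real.log_pos one_lt_two
  have hk0 : (0:ℝ) < (k:ℝ) := by exact_mod_cast hk
  have hp1 : (0:ℝ) < p - 1 := by linarith
  set s : ℝ := tailS p k with hs
  have spos : 0 < s := tailS_pos hp hk
  have supper : s ≤ (1 + (p-1)⁻¹) * (k:ℝ) ^ (1-p) := tailS_upper hp hk
  have slower : (p-1)⁻¹ * (k:ℝ) ^ (1-p) ≤ s := tailS_lower hp hk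
  have hCp1 : (1:ℝ) < 1 + (p-1)⁻¹ := by
    have : 0 < (p-1)⁻¹ := inv_pos.mpr hp1
    linarith
  have hXp : 0 < (k:ℝ) ^ (1-p) := Real.rpow_pos_of_pos hk0 _
  have hlogs : Real.log s ≤ Real.log (1 + (p-1)⁻¹) + (1-p) * Real.log k := by
    have h1 : Real.log s ≤ Real.log ((1 + (p-1)⁻¹) * (k:ℝ) ^ (1-p)) :=
      (Real.log_le_log_iff spos (by positivity)).mpr supper
    rwa [Real.log_mul (by linarith) (ne_of_gt hXp), Real.log_rpow hk0] at h1
  have hneg : (p-1)/2 * Real.log k ≤ -Real.log s := by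
    have h2 := mul_le_mul_of_nonneg_left hlog (by linarith : (0:ℝ) ≤ (p-1)/2)
    rw [show (p-1)/2 * (2 * (p-1)⁻¹ * Real.log (1 + (p-1)⁻¹))
        = ((p-1) * (p-1)⁻¹) * Real.log (1 + (p-1)⁻¹) by ring,
      mul_inv_cancel₀ (ne_of_gt hp1), one_mul] at h2
    linarith
  rw [entTerm_ofReal (le_of_lt spos)]
  apply ENNReal.ofReal_le_ofReal
  have hprod : ((p-1)⁻¹ * (k:ℝ) ^ (1-p)) * ((p-1)/2 * Real.log k) ≤ s * (-Real.log s) := by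
    apply mul_le_mul slower hneg (by positivity) (le_of_lt spos)
  have hsimp : ((p-1)⁻¹ * (k:ℝ) ^ (1-p)) * ((p-1)/2 * Real.log k)
      = ((k:ℝ) ^ (1-p) * Real.log k) / 2 := by
    rw [show ((p-1)⁻¹ * (k:ℝ) ^ (1-p)) * ((p-1)/2 * Real.log k)
        = ((p-1) * (p-1)⁻¹) * ((k:ℝ) ^ (1-p) * Real.log k / 2) by ring,
      mul_inv_cancel₀ (ne_of_gt hp1), one_mul]
  rw [hsimp] at hprod
  rw [div_eq_mul_inv (s * (-Real.log s)),
    show (2 * Real.log 2)⁻¹ * ((k:ℝ) ^ (1-p) * Real.log k)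
      = ((k:ℝ) ^ (1-p) * Real.log k / 2) * (Real.log 2)⁻¹ by ring]
  exact mul_le_mul_of_nonneg_right hprod (inv_nonneg.mpr (le_of_lt hL))

/-- Polynomial envelopes satisfy the tail regularity condition: for `p > 1` and
`f_p(i) = i^{−p}`,
`limsup_k (∑_{i ≥ k} f_p(i)·log₂(1/f_p(i))) / (μ̃_{f_p}(T_k)·log₂(1/μ̃_{f_p}(T_k))) < ∞`. -/
theorem polynomial_envelope_tail_regularity (p : ℝ) (hp : 1 < p) :
    Filter.limsup (fun k : ℕ =>
        (∑' i : Tset k, entTerm ((((i.1 : ℝ≥0) ^ (-p) : ℝ≥0)) : ℝ≥0∞))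
          / entTerm (measOf (mutilde (fun i : ℕ => (i : ℝ≥0) ^ (-p))) (Tset k)))
      atTop < ⊤ := by
  have hL : 0 < Real.log 2 := Real.log_pos one_lt_two
  set A : ℝ := (p / Real.log 2) * ((1 + (p-1)⁻¹) + 1) with hA
  set B : ℝ := (2 * Real.log 2)⁻¹ with hB
  have hp1 : (0:ℝ) < p - 1 := by linarith
  have hApos : 0 < A := by
    apply mul_pos (div_pos (by linarith) hL)
    have : 0 < (p-1)⁻¹ := inv_pos.mpr hp1
    linarith
  have hBpos : 0 < B := by rw [hB]; positivity
  have hlogtend : Tendsto (fun k : ℕ => Real.log k) atTop atTop :=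
    Real.tendsto_log_atTop.comp tendsto_natCast_atTop_atTop
  set M : ℝ := max (((p-1)/2)⁻¹ * (1 + ((p+1)/2 - 1)⁻¹))
    (max (2 * (p-1)⁻¹ * Real.log (1 + (p-1)⁻¹)) 1) with hM
  have hev : ∀ᶠ k : ℕ in atTop,
      (∑' i : Tset k, entTerm ((((i.1 : ℝ≥0) ^ (-p) : ℝ≥0)) : ℝ≥0∞))
          / entTerm (measOf (mutilde (fun i : ℕ => (i : ℝ≥0) ^ (-p))) (Tset k))
        ≤ ENNReal.ofReal (A / B) := by
    filter_upwards [hlogtend.eventually_ge_atTop M,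
      eventually_ge_atTop (max (tauF (fun i : ℕ => (i : ℝ≥0) ^ (-p))) 1)] with k hlogk hk
    have hk1 : 1 ≤ k := le_trans (le_max_right _ _) hk
    have hkτ : tauF (fun i : ℕ => (i : ℝ≥0) ^ (-p)) ≤ k := le_trans (le_max_left _ _) hk
    have hk0 : (0:ℝ) < (k:ℝ) := by exact_mod_cast hk1
    have hM1 : (1:ℝ) ≤ M := le_trans (le_max_right _ _) (le_max_right _ _)
    have hklog1 : 1 ≤ Real.log k := le_trans hM1 hlogk
    have hX : 0 < (k:ℝ) ^ (1-p) * Real.log k :=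
      mul_pos (Real.rpow_pos_of_pos hk0 _) (by linarith)
    have hnum : (∑' i : Tset k, entTerm ((((i.1 : ℝ≥0) ^ (-p) : ℝ≥0)) : ℝ≥0∞))
        ≤ ENNReal.ofReal (A * ((k:ℝ) ^ (1-p) * Real.log k)) := by
      rw [num_sum_eq hp hk1]
      apply ENNReal.ofReal_le_ofReal
      have h1 := num_tsum_le hp hk1 (le_trans (le_max_left _ _) hlogk)
      have h2 : A * ((k:ℝ) ^ (1-p) * Real.log k)
          = (p / Real.log 2) * ((1 + (p-1)⁻¹) + 1) * ((k:ℝ) ^ (1-p) * Real.log k) := by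
        rw [hA]
      linarith
    have hden : ENNReal.ofReal (B * ((k:ℝ) ^ (1-p) * Real.log k))
        ≤ entTerm (measOf (mutilde (fun i : ℕ => (i : ℝ≥0) ^ (-p))) (Tset k)) := by
      rw [measOf_mutilde hp hkτ hk1, hB]
      exact denom_bound hp hk1
        (le_trans (le_trans (le_max_left _ _) (le_max_right _ _)) hlogk) hklog1
    calc (∑' i : Tset k, entTerm ((((i.1 : ℝ≥0) ^ (-p) : ℝ≥0)) : ℝ≥0∞))
          / entTerm (measOf (mutilde (fun i : ℕ => (i : ℝ≥0) ^ (-p))) (Tset k))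
        ≤ ENNReal.ofReal (A * ((k:ℝ) ^ (1-p) * Real.log k))
            / ENNReal.ofReal (B * ((k:ℝ) ^ (1-p) * Real.log k)) :=
          ENNReal.div_le_div hnum hden
      _ = ENNReal.ofReal ((A * ((k:ℝ) ^ (1-p) * Real.log k))
            / (B * ((k:ℝ) ^ (1-p) * Real.log k))) :=
          (ENNReal.ofReal_div_of_pos (mul_pos hBpos hX)).symm
      _ = ENNReal.ofReal (A / B) := by
          rw [mul_div_mul_comm, div_self (ne_of_gt hX), mul_one]
  have hls := Filter.limsup_le_of_le (by isBoundedDefault) hev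
  exact lt_of_le_of_lt hls ENNReal.ofReal_lt_top
end
end

section
/- (Upper bound on the weighted-log polynomial tail series.) Let p > 1. Then for every k ≥ 2: ∑_{i ≥ k} log₂(i)/i^p ≤ (log₂(k)/k^{p−1})·∑_{i ≥ 1} i^{−p} + (1/k^{p−1})·∑_{i ≥ 1} log₂(i+1)/i^p. -/
open Filter Topology
open scoped ENNReal NNReal BigOperators

noncomputable section

/-- Upper bound on the weighted-log polynomial tail series: for `p > 1` and
every `k ≥ 2`:
`∑_{i ≥ k} log₂(i)/i^p ≤ (log₂(k)/k^{p−1})·∑_{i ≥ 1} i^{−p}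
  + (1/k^{p−1})·∑_{i ≥ 1} log₂(i+1)/i^p`. -/
theorem weighted_log_tail_bound (p : ℝ) (hp : 1 < p) (k : ℕ) (hk : 2 ≤ k) :
    (∑' i : Tset k, Real.logb 2 (i.1 : ℝ) / (i.1 : ℝ) ^ p)
      ≤ (Real.logb 2 (k : ℝ) / (k : ℝ) ^ (p - 1)) * (∑' i : Tset 1, ((i.1 : ℝ) ^ (-p)))
        + (1 / (k : ℝ) ^ (p - 1)) * (∑' i : Tset 1, Real.logb 2 ((i.1 : ℝ) + 1) / (i.1 : ℝ) ^ p) := by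
  have hkn : 0 < k := by omega
  have hkR : (1:ℝ) < (k:ℝ) := by exact_mod_cast (by omega : 1 < k)
  have hk0 : (0:ℝ) < (k:ℝ) := by linarith
  have hp0 : (0:ℝ) < p := by linarith
  set L : ℝ := Real.logb 2 (k:ℝ) with hLdef
  have hLnn : 0 ≤ L := Real.logb_nonneg one_lt_two hkR.le
  set B : ℕ → ℝ := fun j => (L + Real.logb 2 ((j:ℝ)+1)) / ((k:ℝ)*(j:ℝ))^p with hBdef
  -- summability of the two basic series
  have hS1 : Summable (fun j : ℕ => (j:ℝ)^(-p)) := Real.summable_nat_rpow.mpr (by linarith)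
  have hS2 : Summable (fun j : ℕ => Real.logb 2 ((j:ℝ)+1) / (j:ℝ)^p) := by
    set ε : ℝ := (p-1)/2 with hεdef
    have hε : 0 < ε := by rw [hεdef]; linarith
    have hC : Summable (fun j : ℕ => ((2:ℝ)^ε/(ε*Real.log 2)) * (j:ℝ)^(ε-p)) :=
      (Real.summable_nat_rpow.mpr (by rw [hεdef]; linarith)).mul_left _
    refine hC.of_nonneg_of_le (fun j => ?_) (fun j => ?_)
    · have : (0:ℝ) ≤ (j:ℝ) := Nat.cast_nonneg j
      exact div_nonneg (Real.logb_nonneg one_lt_two (by linarith)) (Real.rpow_nonneg (Nat.cast_nonneg j) p)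
    · rcases Nat.eq_zero_or_pos j with rfl | hj
      · simp [Real.zero_rpow (by linarith : ε - p ≠ 0)]
      · have hjR : (1:ℝ) ≤ (j:ℝ) := by exact_mod_cast hj
        have hj0 : (0:ℝ) < (j:ℝ) := by linarith
        have hlog2 : (0:ℝ) < Real.log 2 := Real.log_pos one_lt_two
        have h3 : Real.log ((j:ℝ)+1) ≤ 2^ε * (j:ℝ)^ε / ε := by
          calc Real.log ((j:ℝ)+1) ≤ ((j:ℝ)+1)^ε/ε := Real.log_le_rpow_div (by linarith) hε
          _ ≤ 2^ε * (j:ℝ)^ε / ε := by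
              gcongr
              rw [← Real.mul_rpow (by norm_num) hj0.le]
              exact Real.rpow_le_rpow (by linarith) (by linarith) hε.le
        have h4 : Real.logb 2 ((j:ℝ)+1) ≤ ((2:ℝ)^ε/(ε*Real.log 2)) * (j:ℝ)^ε := by
          rw [Real.logb]
          have heq : ((2:ℝ)^ε/(ε*Real.log 2)) * (j:ℝ)^ε = (2^ε * (j:ℝ)^ε / ε)/Real.log 2 := by
            field_simp
          rw [heq]
          exact div_le_div_of_nonneg_right h3 hlog2.le
        calc Real.logb 2 ((j:ℝ)+1) / (j:ℝ)^p
            ≤ (((2:ℝ)^ε/(ε*Real.log 2)) * (j:ℝ)^ε) / (j:ℝ)^p := by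
              gcongr
        _ = ((2:ℝ)^ε/(ε*Real.log 2)) * (j:ℝ)^(ε-p) := by
              rw [Real.rpow_sub hj0]; ring
  have hS1' : Summable (fun i : Tset 1 => ((i.1:ℝ))^(-p)) := hS1.subtype (Tset 1)
  have hS2' : Summable (fun i : Tset 1 => Real.logb 2 ((i.1:ℝ)+1) / (i.1:ℝ)^p) := hS2.subtype (Tset 1)
  -- nonnegativity of B on indices ≥ 1, and of g
  have hBnn : ∀ x : Tset 1 × Fin k, 0 ≤ B x.1.1 := by
    intro x
    have h1 : (1:ℝ) ≤ (x.1.1:ℝ) := by exact_mod_cast x.1.2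
    apply div_nonneg
    · exact add_nonneg hLnn (Real.logb_nonneg one_lt_two (by linarith))
    · exact Real.rpow_nonneg (by positivity) p
  -- summability of g on the product
  have hgsum : Summable (fun x : Tset 1 × Fin k => B x.1.1) := by
    refine (summable_prod_of_nonneg hBnn).mpr ⟨fun _ => Summable.of_finite, ?_⟩
    have hfib : ∀ j : Tset 1, (∑' _ : Fin k, B j.1) = (k:ℝ) * B j.1 := by
      intro j
      simp [tsum_fintype, Finset.sum_const, nsmul_eq_mul]
    rw [show (fun j : Tset 1 => ∑' _ : Fin k, B j.1) = fun j : Tset 1 => (k:ℝ) * B j.1 from funext hfib]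
    refine Summable.mul_left _ ?_
    -- Summable (fun j : Tset 1 => B j.1)
    have : Summable (fun j : ℕ => B j) := by
      have h1 : Summable (fun j : ℕ => (L/(k:ℝ)^p) * (j:ℝ)^(-p)) := hS1.mul_left _
      have h2 : Summable (fun j : ℕ => ((k:ℝ)^(-p)) * (Real.logb 2 ((j:ℝ)+1) / (j:ℝ)^p)) := hS2.mul_left _
      refine (h1.add h2).of_nonneg_of_le (fun j => ?_) (fun j => ?_)
      · rcases Nat.eq_zero_or_pos j with rfl | hj
        · simp [hBdef, Real.zero_rpow hp0.ne']
        · exact hBnn ⟨⟨j, hj⟩, ⟨0, hkn⟩⟩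
      · rcases Nat.eq_zero_or_pos j with rfl | hj
        · simp [hBdef, Real.zero_rpow hp0.ne', Real.zero_rpow (neg_ne_zero.mpr hp0.ne')]
        · have hj0 : (0:ℝ) < (j:ℝ) := by exact_mod_cast hj
          have heq : B j = (L/(k:ℝ)^p) * (j:ℝ)^(-p) + ((k:ℝ)^(-p)) * (Real.logb 2 ((j:ℝ)+1) / (j:ℝ)^p) := by
            rw [hBdef]
            simp only
            rw [Real.mul_rpow hk0.le hj0.le, Real.rpow_neg hj0.le, Real.rpow_neg hk0.le]
            have hkp : ((k:ℝ))^p ≠ 0 := by positivity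
            have hjp : ((j:ℝ))^p ≠ 0 := by positivity
            field_simp
            try ring
          rw [heq]
    exact this.subtype (Tset 1)
  -- the injection
  have hembed : ∀ i : Tset k, 1 ≤ i.1 / k := fun i => (Nat.one_le_div_iff hkn).mpr i.2
  set e : Tset k → Tset 1 × Fin k :=
    fun i => (⟨i.1 / k, hembed i⟩, ⟨i.1 % k, Nat.mod_lt _ hkn⟩) with hedef
  have he : Function.Injective e := by
    intro a b hab
    have h1 : a.1 / k = b.1 / k := congrArg (fun x => x.1.1) hab
    have h2 : a.1 % k = b.1 % k := congrArg (fun x => (x.2 : ℕ)) hab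
    have ha := Nat.div_add_mod a.1 k
    have hb := Nat.div_add_mod b.1 k
    exact Subtype.ext (by rw [← ha, ← hb, h1, h2])
  -- termwise bound
  have hle : ∀ i : Tset k, Real.logb 2 (i.1:ℝ) / (i.1:ℝ)^p ≤ B (i.1 / k) := by
    intro i
    have hki : k ≤ i.1 := i.2
    set j : ℕ := i.1 / k with hjdef
    have hj1 : 1 ≤ j := hembed i
    have hjR : (1:ℝ) ≤ (j:ℝ) := by exact_mod_cast hj1
    have hiR : (2:ℝ) ≤ (i.1:ℝ) := by exact_mod_cast le_trans hk hki
    have hlow : k * j ≤ i.1 := by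
      rw [hjdef, mul_comm]; exact Nat.div_mul_le_self i.1 k
    have hhigh : i.1 < k * (j+1) := Nat.lt_mul_div_succ i.1 hkn
    have hkj0 : (0:ℝ) < (k:ℝ)*(j:ℝ) := by positivity
    have hd1 : ((k:ℝ)*(j:ℝ))^p ≤ (i.1:ℝ)^p := by
      apply Real.rpow_le_rpow hkj0.le _ hp0.le
      exact_mod_cast hlow
    have hnum : Real.logb 2 (i.1:ℝ) ≤ L + Real.logb 2 ((j:ℝ)+1) := by
      have h1 : Real.logb 2 (i.1:ℝ) ≤ Real.logb 2 ((k:ℝ)*((j:ℝ)+1)) := by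
        apply Real.logb_le_logb_of_le one_lt_two (by linarith)
        have : (i.1:ℝ) ≤ ((k * (j+1) : ℕ) : ℝ) := by exact_mod_cast hhigh.le
        calc (i.1:ℝ) ≤ ((k * (j+1) : ℕ) : ℝ) := this
        _ = (k:ℝ)*((j:ℝ)+1) := by push_cast; ring
      rwa [Real.logb_mul (by positivity) (by positivity)] at h1
    have hnum0 : 0 ≤ L + Real.logb 2 ((j:ℝ)+1) :=
      add_nonneg hLnn (Real.logb_nonneg one_lt_two (by linarith))
    exact div_le_div₀ hnum0 hnum (by positivity) hd1
  have hfnn : ∀ i : Tset k, 0 ≤ Real.logb 2 (i.1:ℝ) / (i.1:ℝ)^p := by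
    intro i
    have : (2:ℝ) ≤ (i.1:ℝ) := by exact_mod_cast le_trans hk i.2
    exact div_nonneg (Real.logb_nonneg one_lt_two (by linarith)) (Real.rpow_nonneg (by linarith) p)
  have hf : Summable (fun i : Tset k => Real.logb 2 (i.1:ℝ) / (i.1:ℝ)^p) :=
    (hgsum.comp_injective he).of_nonneg_of_le hfnn hle
  -- the pointwise identity for the RHS
  have hkB : ∀ j : Tset 1, (k:ℝ) * B j.1
      = (L / (k:ℝ)^(p-1)) * ((j.1:ℝ)^(-p))
        + (1/(k:ℝ)^(p-1)) * (Real.logb 2 ((j.1:ℝ)+1)/(j.1:ℝ)^p) := by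
    intro j
    have hj0 : (0:ℝ) < (j.1:ℝ) := by exact_mod_cast lt_of_lt_of_le Nat.zero_lt_one j.2
    rw [hBdef]
    simp only
    rw [Real.mul_rpow hk0.le hj0.le, Real.rpow_neg hj0.le,
      Real.rpow_sub hk0, Real.rpow_one]
    have hkp : ((k:ℝ))^p ≠ 0 := by positivity
    have hjp : ((j.1:ℝ))^p ≠ 0 := by positivity
    field_simp
  -- putting everything together
  calc (∑' i : Tset k, Real.logb 2 (i.1 : ℝ) / (i.1 : ℝ) ^ p)
      ≤ ∑' x : Tset 1 × Fin k, B x.1.1 :=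
        hf.tsum_le_tsum_of_inj e he (fun c _ => hBnn c) hle hgsum
    _ = ∑' (j : Tset 1) (_ : Fin k), B j.1 := Summable.tsum_prod' hgsum (fun _ => Summable.of_finite)
    _ = ∑' j : Tset 1, (k:ℝ) * B j.1 :=
        tsum_congr fun j => by simp [tsum_fintype, Finset.sum_const, nsmul_eq_mul]
    _ = ∑' j : Tset 1, ((L / (k:ℝ)^(p-1)) * ((j.1:ℝ)^(-p))
          + (1/(k:ℝ)^(p-1)) * (Real.logb 2 ((j.1:ℝ)+1)/(j.1:ℝ)^p)) := tsum_congr hkB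
    _ = (L / (k : ℝ) ^ (p - 1)) * (∑' i : Tset 1, ((i.1 : ℝ) ^ (-p)))
        + (1 / (k : ℝ) ^ (p - 1)) * (∑' i : Tset 1, Real.logb 2 ((i.1 : ℝ) + 1) / (i.1 : ℝ) ^ p) := by
        rw [Summable.tsum_add (hS1'.mul_left _) (hS2'.mul_left _), tsum_mul_left, tsum_mul_left]
end
end
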